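/- arXiv:1902.02155 — 6 statements merged into one kernel-verified Lean document; each statement's English description precedes it below -/
import Mathlib

section
/- Let (X_i)_{i≥1} be independent, identically distributed random variables taking values in the natural numbers {0,1,2,...} with finite mean μ = E[X_1] > 1. Then there exist ε > 0 and A ∈ (0,1) such that for every n ≥ 1 and every natural number m with m ≤ (1+ε)·n one has P(X_1 + ... + X_n < m) ≤ A^n. -/
open MeasureTheory ProbabilityTheory Filter Topology

lemma exp_neg_le_quad {x : ℝ} (hx : 0 ≤ x) : Real.exp (-x) ≤ 1 - x + x ^ 2 := by
  have h1 : (0:ℝ) < 1 + x := by linarith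
  have h2 : 1 + x ≤ Real.exp x := by linarith [Real.add_one_le_exp x]
  have h3 : Real.exp (-x) * Real.exp x = 1 := by
    rw [← Real.exp_add]; simp
  have h4 : Real.exp (-x) * (1 + x) ≤ 1 := by
    calc Real.exp (-x) * (1 + x) ≤ Real.exp (-x) * Real.exp x :=
          mul_le_mul_of_nonneg_left h2 (Real.exp_pos _).le
      _ = 1 := h3
  have h5 : (1:ℝ) ≤ (1 - x + x ^ 2) * (1 + x) := by nlinarith [pow_nonneg hx 3]
  nlinarith [h4, h5, h1]

/-- For i.i.d. ℕ-valued random variables with finite mean μ = E[X_1] > 1,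
there exist ε > 0 and A ∈ (0,1) such that for every n ≥ 1 and every m ≤ (1+ε)·n,
P(X_1 + ... + X_n < m) ≤ A^n. -/
theorem iid_sum_lower_tail_exponential_bound
    {Ω : Type*} [MeasurableSpace Ω] (μ : Measure Ω) [IsProbabilityMeasure μ]
    (X : ℕ → Ω → ℕ) (hmeas : ∀ i, Measurable (X i))
    (hindep : iIndepFun X μ)
    (hident : ∀ i, IdentDistrib (X i) (X 0) μ μ)
    (hint : Integrable (fun ω => (X 0 ω : ℝ)) μ)
    (hmean : 1 < ∫ ω, (X 0 ω : ℝ) ∂μ) :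
    ∃ ε : ℝ, 0 < ε ∧ ∃ A ∈ Set.Ioo (0:ℝ) 1, ∀ n : ℕ, 1 ≤ n → ∀ m : ℕ,
      (m : ℝ) ≤ (1 + ε) * n →
      μ {ω | (∑ i ∈ Finset.range n, X i ω) < m} ≤ ENNReal.ofReal (A ^ n) := by
  classical
  -- Step 1: choose a truncation level K with E[min(X₀,K)] > 1
  have hYint : ∀ K : ℕ, Integrable (fun ω => min ((X 0 ω : ℝ)) (K : ℝ)) μ := by
    intro K
    refine hint.mono ?_ ?_
    · exact (((measurable_from_top (f := fun n : ℕ => (n:ℝ))).comp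
        (hmeas 0)).min measurable_const).aestronglyMeasurable
    · refine Filter.Eventually.of_forall fun ω => ?_
      have h0 : (0:ℝ) ≤ min ((X 0 ω : ℝ)) (K : ℝ) :=
        le_min (Nat.cast_nonneg _) (Nat.cast_nonneg _)
      rw [Real.norm_eq_abs, Real.norm_eq_abs, abs_of_nonneg h0,
        abs_of_nonneg (Nat.cast_nonneg _)]
      exact min_le_left _ _
  have htend : Tendsto (fun K : ℕ => ∫ ω, min ((X 0 ω : ℝ)) (K : ℝ) ∂μ) atTop
      (𝓝 (∫ ω, (X 0 ω : ℝ) ∂μ)) := by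
    refine integral_tendsto_of_tendsto_of_monotone (fun K => hYint K) hint ?_ ?_
    · refine Filter.Eventually.of_forall fun ω => ?_
      intro a b hab
      exact min_le_min le_rfl (by exact_mod_cast hab)
    · refine Filter.Eventually.of_forall fun ω => ?_
      have hev : ∀ᶠ K : ℕ in atTop, min ((X 0 ω : ℝ)) (K : ℝ) = (X 0 ω : ℝ) := by
        refine eventually_atTop.2 ⟨X 0 ω, fun K hK => ?_⟩
        exact min_eq_left (by exact_mod_cast hK)
      exact Tendsto.congr' (hev.mono fun K h => h.symm) tendsto_const_nhds
  obtain ⟨K, hK⟩ : ∃ K : ℕ, 1 < ∫ ω, min ((X 0 ω : ℝ)) (K : ℝ) ∂μ := by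
    have := htend.eventually (eventually_gt_nhds hmean)
    exact this.exists
  -- Notation: truncated variables
  set g : ℕ → ℝ := fun x => min ((x : ℝ)) (K : ℝ) with hg_def
  have hg : Measurable g := measurable_from_top
  set Y : ℕ → Ω → ℝ := fun i => g ∘ X i with hY_def
  have hYmeas : ∀ i, Measurable (Y i) := fun i => hg.comp (hmeas i)
  have hYindep : iIndepFun Y μ :=
    hindep.comp (fun _ => g) (fun _ => hg)
  have hYid : ∀ i, IdentDistrib (Y i) (Y 0) μ μ := fun i => (hident i).comp hg
  have hY0 : ∀ i ω, 0 ≤ Y i ω := fun i ω =>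
    le_min (Nat.cast_nonneg _) (Nat.cast_nonneg _)
  have hYK : ∀ i ω, Y i ω ≤ (K : ℝ) := fun i ω => min_le_right _ _
  have hY0int : Integrable (Y 0) μ := hYint K
  set c : ℝ := ∫ ω, Y 0 ω ∂μ with hc_def
  have hc : 1 < c := hK
  -- K ≥ 1
  have hcK : c ≤ (K : ℝ) := by
    have := integral_mono hY0int (integrable_const (K : ℝ)) (fun ω => hYK 0 ω)
    simpa using this
  have hK1 : (1:ℝ) ≤ (K : ℝ) := le_trans hc.le hcK
  have hKpos : (0:ℝ) < (K : ℝ) := lt_of_lt_of_le one_pos hK1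
  -- parameters
  set ε : ℝ := (c - 1) / 2 with hε_def
  have hεpos : 0 < ε := by simp only [hε_def]; linarith
  have hc2 : c = 1 + 2 * ε := by simp only [hε_def]; ring
  set t₀ : ℝ := ε / (2 * (K:ℝ) ^ 2) with ht₀_def
  have ht₀pos : 0 < t₀ := by positivity
  have ht₀sq : t₀ ^ 2 * (K:ℝ) ^ 2 = t₀ * ε / 2 := by
    have hKne : ((K:ℝ)) ≠ 0 := ne_of_gt hKpos
    field_simp [ht₀_def]
    rw [ht₀_def]
    field_simp
  set A : ℝ := Real.exp (-(t₀ * ε) / 2) with hA_def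
  refine ⟨ε, hεpos, A, ⟨Real.exp_pos _, by
      rw [hA_def, Real.exp_lt_one_iff]
      nlinarith⟩, ?_⟩
  -- per-variable mgf bound
  have hexp_int : ∀ (Z : Ω → ℝ), Measurable Z → (∀ ω, 0 ≤ Z ω) →
      Integrable (fun ω => Real.exp (-t₀ * Z ω)) μ := by
    intro Z hZ hZ0
    refine (integrable_const (1:ℝ)).mono' ((hZ.const_mul (-t₀)).exp.aestronglyMeasurable) ?_
    refine Filter.Eventually.of_forall fun ω => ?_
    rw [Real.norm_eq_abs, abs_of_nonneg (Real.exp_nonneg _)]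
    have : -t₀ * Z ω ≤ 0 := mul_nonpos_of_nonpos_of_nonneg (by linarith) (hZ0 ω)
    exact Real.exp_le_one_iff.mpr this
  have hmgf0 : mgf (Y 0) μ (-t₀) ≤ Real.exp (-(t₀ * c) + t₀ ^ 2 * (K:ℝ) ^ 2) := by
    have hpt : ∀ ω, Real.exp (-t₀ * Y 0 ω) ≤ 1 - t₀ * Y 0 ω + t₀ ^ 2 * (K:ℝ) ^ 2 := by
      intro ω
      have hx : 0 ≤ t₀ * Y 0 ω := mul_nonneg ht₀pos.le (hY0 0 ω)
      have h1 : Real.exp (-(t₀ * Y 0 ω)) ≤ 1 - t₀ * Y 0 ω + (t₀ * Y 0 ω) ^ 2 :=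
        exp_neg_le_quad hx
      have h2 : (t₀ * Y 0 ω) ^ 2 ≤ t₀ ^ 2 * (K:ℝ) ^ 2 := by
        rw [mul_pow]
        exact mul_le_mul_of_nonneg_left
          (pow_le_pow_left₀ (hY0 0 ω) (hYK 0 ω) 2) (sq_nonneg t₀)
      calc Real.exp (-t₀ * Y 0 ω) = Real.exp (-(t₀ * Y 0 ω)) := by ring_nf
        _ ≤ 1 - t₀ * Y 0 ω + (t₀ * Y 0 ω) ^ 2 := h1
        _ ≤ 1 - t₀ * Y 0 ω + t₀ ^ 2 * (K:ℝ) ^ 2 := by linarith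
    have hI1 : Integrable (fun ω => 1 - t₀ * Y 0 ω) μ := by
      exact (integrable_const (1:ℝ)).sub (hY0int.const_mul t₀)
    have hRHSint : Integrable (fun ω => 1 - t₀ * Y 0 ω + t₀ ^ 2 * (K:ℝ) ^ 2) μ := by
      exact hI1.add (integrable_const _)
    have hint_mgf : ∫ ω, Real.exp (-t₀ * Y 0 ω) ∂μ ≤
        ∫ ω, (1 - t₀ * Y 0 ω + t₀ ^ 2 * (K:ℝ) ^ 2) ∂μ :=
      integral_mono (hexp_int (Y 0) (hYmeas 0) (hY0 0)) hRHSint hpt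
    have hval : ∫ ω, (1 - t₀ * Y 0 ω + t₀ ^ 2 * (K:ℝ) ^ 2) ∂μ
        = 1 - t₀ * c + t₀ ^ 2 * (K:ℝ) ^ 2 := by
      rw [integral_add hI1 (integrable_const _),
        integral_sub (integrable_const _) (hY0int.const_mul t₀),
        integral_const, integral_const_mul]
      simp [hc_def]
    have hfinal : 1 - t₀ * c + t₀ ^ 2 * (K:ℝ) ^ 2 ≤
        Real.exp (-(t₀ * c) + t₀ ^ 2 * (K:ℝ) ^ 2) := by
      have := Real.add_one_le_exp (-(t₀ * c) + t₀ ^ 2 * (K:ℝ) ^ 2)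
      linarith
    calc mgf (Y 0) μ (-t₀) = ∫ ω, Real.exp (-t₀ * Y 0 ω) ∂μ := rfl
      _ ≤ ∫ ω, (1 - t₀ * Y 0 ω + t₀ ^ 2 * (K:ℝ) ^ 2) ∂μ := hint_mgf
      _ = 1 - t₀ * c + t₀ ^ 2 * (K:ℝ) ^ 2 := hval
      _ ≤ Real.exp (-(t₀ * c) + t₀ ^ 2 * (K:ℝ) ^ 2) := hfinal
  -- final estimate
  intro n hn m hm
  set S : Ω → ℝ := ∑ i ∈ Finset.range n, Y i with hS_def
  have hSfun : S = fun ω => ∑ i ∈ Finset.range n, Y i ω := by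
    funext ω; simp [hS_def]
  have hSmeas : Measurable S := by
    rw [hSfun]
    exact Finset.measurable_sum _ (fun i _ => hYmeas i)
  have hS0 : ∀ ω, 0 ≤ S ω := by
    intro ω
    simp only [hS_def, Finset.sum_apply]
    exact Finset.sum_nonneg fun i _ => hY0 i ω
  have hsub : {ω | (∑ i ∈ Finset.range n, X i ω) < m} ⊆ {ω | S ω ≤ (m:ℝ)} := by
    intro ω hω
    simp only [Set.mem_setOf_eq] at hω ⊢
    have h1 : S ω ≤ ((∑ i ∈ Finset.range n, X i ω : ℕ) : ℝ) := by
      simp only [hS_def, Finset.sum_apply]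
      push_cast
      refine Finset.sum_le_sum fun i _ => min_le_left _ _
    have h2 : ((∑ i ∈ Finset.range n, X i ω : ℕ) : ℝ) ≤ (m : ℝ) := by
      exact_mod_cast hω.le
    linarith
  have hintS : Integrable (fun ω => Real.exp (-t₀ * S ω)) μ := hexp_int S hSmeas hS0
  have key := measure_le_le_exp_mul_mgf (μ := μ) (X := S) (m : ℝ)
    (t := -t₀) (by linarith) hintS
  have hprod : mgf S μ (-t₀) = (mgf (Y 0) μ (-t₀)) ^ n := by
    rw [hS_def, hYindep.mgf_sum hYmeas]
    have : ∀ i ∈ Finset.range n, mgf (Y i) μ (-t₀) = mgf (Y 0) μ (-t₀) := by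
      intro i _
      have hid : IdentDistrib (fun ω => Real.exp (-t₀ * Y i ω))
          (fun ω => Real.exp (-t₀ * Y 0 ω)) μ μ :=
        (hYid i).comp ((measurable_id.const_mul (-t₀)).exp)
      exact hid.integral_eq
    rw [Finset.prod_congr rfl this, Finset.prod_const, Finset.card_range]
  have hmgf_nonneg : 0 ≤ mgf (Y 0) μ (-t₀) := mgf_nonneg
  have hchain : (μ {ω | S ω ≤ (m:ℝ)}).toReal ≤ A ^ n := by
    have h1 : (μ {ω | S ω ≤ (m:ℝ)}).toReal ≤
        Real.exp (-(-t₀) * (m:ℝ)) * mgf S μ (-t₀) := key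
    have h2 : Real.exp (-(-t₀) * (m:ℝ)) * mgf S μ (-t₀) ≤
        Real.exp (t₀ * m) * Real.exp (-(t₀ * c) + t₀ ^ 2 * (K:ℝ) ^ 2) ^ n := by
      rw [hprod, neg_neg]
      exact mul_le_mul_of_nonneg_left (pow_le_pow_left₀ hmgf_nonneg hmgf0 n)
        (Real.exp_nonneg _)
    have h3 : Real.exp (t₀ * m) * Real.exp (-(t₀ * c) + t₀ ^ 2 * (K:ℝ) ^ 2) ^ n ≤ A ^ n := by
      rw [← Real.exp_nat_mul, ← Real.exp_add, hA_def, ← Real.exp_nat_mul,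
        Real.exp_le_exp]
      have hmb : t₀ * m ≤ t₀ * ((1 + ε) * n) := mul_le_mul_of_nonneg_left hm ht₀pos.le
      calc t₀ * (m:ℝ) + (n:ℝ) * (-(t₀ * c) + t₀ ^ 2 * (K:ℝ) ^ 2)
          ≤ t₀ * ((1 + ε) * (n:ℝ)) + (n:ℝ) * (-(t₀ * c) + t₀ ^ 2 * (K:ℝ) ^ 2) := by
            linarith
        _ = (n:ℝ) * (-(t₀ * ε) / 2) := by rw [hc2, ht₀sq]; ring
    linarith
  calc μ {ω | (∑ i ∈ Finset.range n, X i ω) < m}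
      ≤ μ {ω | S ω ≤ (m:ℝ)} := measure_mono hsub
    _ = ENNReal.ofReal ((μ {ω | S ω ≤ (m:ℝ)}).toReal) :=
        (ENNReal.ofReal_toReal (measure_ne_top _ _)).symm
    _ ≤ ENNReal.ofReal (A ^ n) := ENNReal.ofReal_le_ofReal hchain
end

section
/- Let X be a random variable taking values in the natural numbers {0,1,2,...} with finite mean μ = E[X] > 1, and let f(u) = E[u^X] denote its probability generating function for u ∈ [0,1]. Then there exist u₀ ∈ (0,1) and ε > 0 such that f(u₀) < u₀^{1+ε}. -/
open MeasureTheory ProbabilityTheory Filter Topology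

/-- For an ℕ-valued random variable X with finite mean E[X] > 1 and
probability generating function f(u) = E[u^X], there exist u₀ ∈ (0,1) and ε > 0
such that f(u₀) < u₀^(1+ε). -/
theorem pgf_below_power_of_mean_gt_one
    {Ω : Type*} [MeasurableSpace Ω] (μ : Measure Ω) [IsProbabilityMeasure μ]
    (X : Ω → ℕ) (hmeas : Measurable X)
    (hint : Integrable (fun ω => (X ω : ℝ)) μ)
    (hmean : 1 < ∫ ω, (X ω : ℝ) ∂μ) :
    ∃ u₀ ∈ Set.Ioo (0:ℝ) 1, ∃ ε : ℝ, 0 < ε ∧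
      (∫ ω, u₀ ^ (X ω) ∂μ) < u₀ ^ ((1:ℝ) + ε) := by
  set u : ℕ → ℝ := fun n => 1 - 1/(n+2) with hu
  have hu01 : ∀ n, 0 < u n ∧ u n < 1 := by
    intro n
    have h2 : (0:ℝ) < (n:ℝ) + 2 := by positivity
    constructor
    · have : 1/((n:ℝ)+2) < 1 := by
        rw [div_lt_one h2]; linarith
      simp only [hu]; linarith
    · have : 0 < 1/((n:ℝ)+2) := by positivity
      simp only [hu]; linarith
  set g : ℕ → Ω → ℝ := fun n ω => ∑ i ∈ Finset.range (X ω), (u n) ^ i with hg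
  have hintg : ∀ n, Integrable (g n) μ := by
    intro n
    refine hint.mono ?_ ?_
    · exact ((measurable_from_top (f := fun m : ℕ => ∑ i ∈ Finset.range m, (u n)^i)).comp hmeas).aestronglyMeasurable
    · refine Filter.Eventually.of_forall fun ω => ?_
      simp only [Real.norm_eq_abs]
      rw [abs_of_nonneg (Finset.sum_nonneg fun i _ => pow_nonneg (hu01 n).1.le i)]
      calc g n ω ≤ ∑ i ∈ Finset.range (X ω), (1:ℝ) := by
            refine Finset.sum_le_sum fun i _ => ?_
            exact pow_le_one₀ (hu01 n).1.le (hu01 n).2.le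
        _ = (X ω : ℝ) := by simp
        _ ≤ |(X ω : ℝ)| := le_abs_self _
  have hmono : ∀ ω, Monotone fun n => g n ω := by
    intro ω m k hmk
    refine Finset.sum_le_sum fun i _ => ?_
    refine pow_le_pow_left₀ (hu01 m).1.le ?_ i
    have : (m:ℝ) + 2 ≤ (k:ℝ) + 2 := by
      have := (Nat.cast_le (α := ℝ)).mpr hmk; linarith
    have h2 : (0:ℝ) < (m:ℝ) + 2 := by positivity
    simp only [hu]
    have := one_div_le_one_div_of_le h2 this
    linarith
  have hlim : ∀ ω, Tendsto (fun n => g n ω) atTop (𝓝 ((X ω : ℝ))) := by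
    intro ω
    have hun : Tendsto u atTop (𝓝 1) := by
      have h2 : Tendsto (fun n : ℕ => ((n:ℝ)+2)) atTop atTop :=
        tendsto_atTop_add_const_right _ 2 tendsto_natCast_atTop_atTop
      have h3 : Tendsto (fun n : ℕ => 1/((n:ℝ)+2)) atTop (𝓝 0) := by
        simp only [one_div]; exact h2.inv_tendsto_atTop
      have h := (tendsto_const_nhds (x := (1:ℝ)) (f := (atTop : Filter ℕ))).sub h3
      simpa [hu] using h
    have : Tendsto (fun n => g n ω) atTop
        (𝓝 (∑ i ∈ Finset.range (X ω), (1:ℝ) ^ i)) := by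
      exact tendsto_finset_sum _ fun i _ => (hun.pow i)
    simpa using this
  have hI : Tendsto (fun n => ∫ ω, g n ω ∂μ) atTop (𝓝 (∫ ω, (X ω : ℝ) ∂μ)) :=
    integral_tendsto_of_tendsto_of_monotone hintg hint
      (Filter.Eventually.of_forall hmono) (Filter.Eventually.of_forall hlim)
  have hev : ∀ᶠ n in atTop, 1 < ∫ ω, g n ω ∂μ :=
    hI.eventually (eventually_gt_nhds hmean)
  obtain ⟨n, hn⟩ := hev.exists
  set u₀ := u n with hu₀
  have h0 : 0 < u₀ := (hu01 n).1
  have h1 : u₀ < 1 := (hu01 n).2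
  -- f(u₀) = 1 - (1-u₀) * ∫ g n
  have hfeq : (∫ ω, u₀ ^ (X ω) ∂μ) = 1 - (1 - u₀) * ∫ ω, g n ω ∂μ := by
    have hpt : ∀ ω, u₀ ^ (X ω) = 1 - (1 - u₀) * g n ω := by
      intro ω
      have := geom_sum_mul u₀ (X ω)
      simp only [hg]
      nlinarith [this]
    calc (∫ ω, u₀ ^ (X ω) ∂μ) = ∫ ω, (1 - (1 - u₀) * g n ω) ∂μ := by
          exact integral_congr_ae (Filter.Eventually.of_forall hpt)
      _ = (∫ _ω, (1:ℝ) ∂μ) - ∫ ω, (1 - u₀) * g n ω ∂μ :=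
          integral_sub (integrable_const 1) ((hintg n).const_mul _)
      _ = 1 - (1 - u₀) * ∫ ω, g n ω ∂μ := by
          rw [MeasureTheory.integral_const_mul]; simp
  have hflt : (∫ ω, u₀ ^ (X ω) ∂μ) < u₀ := by
    rw [hfeq]
    have h1u : 0 < 1 - u₀ := by linarith
    nlinarith
  -- choose ε by continuity of the exponent
  have hcont : Tendsto (fun ε : ℝ => u₀ ^ ((1:ℝ) + ε)) (𝓝[>] 0) (𝓝 u₀) := by
    have hc : ContinuousAt (fun y : ℝ => u₀ ^ y) 1 :=
      (Real.continuousAt_const_rpow (ne_of_gt h0))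
    have : Tendsto (fun ε : ℝ => (1:ℝ) + ε) (𝓝[>] 0) (𝓝 1) := by
      have h := ((continuous_const (y := (1:ℝ))).add continuous_id).tendsto (0:ℝ)
      have h' : Tendsto (fun ε : ℝ => (1:ℝ) + ε) (𝓝 0) (𝓝 ((1:ℝ) + 0)) := h
      rw [add_zero] at h'
      exact h'.mono_left nhdsWithin_le_nhds
    have h := hc.tendsto.comp this
    have h' : Tendsto (fun ε : ℝ => u₀ ^ ((1:ℝ) + ε)) (𝓝[>] 0) (𝓝 (u₀ ^ (1:ℝ))) := h; rwa [Real.rpow_one] at h'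
  have hev2 : ∀ᶠ ε in 𝓝[>] (0:ℝ), (∫ ω, u₀ ^ (X ω) ∂μ) < u₀ ^ ((1:ℝ) + ε) :=
    hcont.eventually (eventually_gt_nhds hflt)
  obtain ⟨ε, hεmem, hε⟩ := (hev2.and self_mem_nhdsWithin).exists
  exact ⟨u₀, ⟨h0, h1⟩, ε, hε, hεmem⟩
end

section
/- Let Λ be a finite measure on the interval [0,1] and for each integer N ≥ 2 define λ_N := Σ_{k=2}^{N} binom(N,k) ∫_{[0,1]} x^{k-2}(1-x)^{N-k} dΛ(x). Then for all integers 2 ≤ N ≤ M one has λ_N ≤ λ_M and λ_M · N(N-1) ≤ λ_N · M(M-1). -/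
open MeasureTheory

namespace LambdaCoalAux

variable (Λ : Measure ℝ) [IsFiniteMeasure Λ]

noncomputable def Iab (a b : ℕ) : ℝ := ∫ x in Set.Icc (0:ℝ) 1, x ^ a * (1 - x) ^ b ∂Λ

lemma intOn (a b : ℕ) : IntegrableOn (fun x : ℝ => x ^ a * (1 - x) ^ b) (Set.Icc 0 1) Λ :=
  (Continuous.continuousOn (by continuity)).integrableOn_compact isCompact_Icc

lemma Iab_nonneg (a b : ℕ) : 0 ≤ Iab Λ a b := by
  refine setIntegral_nonneg measurableSet_Icc (fun x hx => ?_)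
  obtain ⟨h0, h1⟩ := hx
  exact mul_nonneg (pow_nonneg h0 _) (pow_nonneg (by linarith) _)

lemma Iab_split (a b : ℕ) : Iab Λ a (b + 1) = Iab Λ a b - Iab Λ (a + 1) b := by
  have h : ∀ x : ℝ, x ^ a * (1 - x) ^ (b + 1)
      = x ^ a * (1 - x) ^ b - x ^ (a + 1) * (1 - x) ^ b := by intro x; ring
  unfold Iab
  simp_rw [h]
  exact integral_sub (intOn Λ a b) (intOn Λ (a + 1) b)

lemma Iab_mono (b : ℕ) : Iab Λ 0 (b + 1) ≤ Iab Λ 0 b := by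
  refine setIntegral_mono_on (intOn Λ 0 (b + 1)) (intOn Λ 0 b) measurableSet_Icc
    (fun x hx => ?_)
  obtain ⟨h0, h1⟩ := hx
  have hx1 : (0:ℝ) ≤ 1 - x := by linarith
  have := pow_le_pow_of_le_one hx1 (by linarith) (Nat.le_succ b)
  simpa using this

noncomputable def lamsum (N : ℕ) : ℝ :=
  ∑ k ∈ Finset.Icc 2 N, (N.choose k : ℝ) * Iab Λ (k - 2) (N - k)

lemma lamsum_nonneg (N : ℕ) : 0 ≤ lamsum Λ N :=
  Finset.sum_nonneg fun k _ => mul_nonneg (Nat.cast_nonneg _) (Iab_nonneg Λ _ _)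

lemma lamsum_ge (N : ℕ) (hN : 2 ≤ N) :
    (N.choose 2 : ℝ) * Iab Λ 0 (N - 2) ≤ lamsum Λ N := by
  have h2 : 2 ∈ Finset.Icc 2 N := by simp [hN]
  have := Finset.single_le_sum
    (f := fun k => (N.choose k : ℝ) * Iab Λ (k - 2) (N - k))
    (fun k _ => mul_nonneg (Nat.cast_nonneg _) (Iab_nonneg Λ _ _)) h2
  simpa [lamsum] using this

lemma lamsum_succ (N : ℕ) (hN : 2 ≤ N) :
    lamsum Λ (N + 1) = lamsum Λ N + (N : ℝ) * Iab Λ 0 (N - 1) := by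
  have hPascal : ∀ k ∈ Finset.Icc 2 (N + 1),
      ((N + 1).choose k : ℝ) * Iab Λ (k - 2) (N + 1 - k)
        = (N.choose (k - 1) : ℝ) * Iab Λ (k - 2) (N + 1 - k)
          + (N.choose k : ℝ) * Iab Λ (k - 2) (N + 1 - k) := by
    intro k hk
    obtain ⟨hk2, _⟩ := Finset.mem_Icc.mp hk
    obtain ⟨j, rfl⟩ : ∃ j, k = j + 2 := ⟨k - 2, by omega⟩
    have : (N + 1).choose (j + 2) = N.choose (j + 2 - 1) + N.choose (j + 2) := by
      simp [Nat.choose_succ_succ]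
    rw [this]
    push_cast
    ring
  have hsum : lamsum Λ (N + 1)
      = (∑ k ∈ Finset.Icc 2 (N + 1), (N.choose (k - 1) : ℝ) * Iab Λ (k - 2) (N + 1 - k))
        + ∑ k ∈ Finset.Icc 2 (N + 1), (N.choose k : ℝ) * Iab Λ (k - 2) (N + 1 - k) := by
    unfold lamsum
    rw [Finset.sum_congr rfl hPascal, Finset.sum_add_distrib]
  -- second sum : drop the vanishing top term and split the binomial integral
  have hS1 : ∑ k ∈ Finset.Icc 2 (N + 1), (N.choose k : ℝ) * Iab Λ (k - 2) (N + 1 - k)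
      = lamsum Λ N - ∑ k ∈ Finset.Icc 2 N, (N.choose k : ℝ) * Iab Λ (k - 1) (N - k) := by
    rw [Finset.sum_Icc_succ_top (by omega : 2 ≤ N + 1)]
    rw [Nat.choose_eq_zero_of_lt (Nat.lt_succ_self N)]
    rw [Nat.cast_zero, zero_mul, add_zero]
    unfold lamsum
    rw [← Finset.sum_sub_distrib]
    refine Finset.sum_congr rfl (fun k hk => ?_)
    obtain ⟨hk2, hkN⟩ := Finset.mem_Icc.mp hk
    have h1 : N + 1 - k = (N - k) + 1 := by omega
    have h2 : (k - 2) + 1 = k - 1 := by omega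
    rw [h1, Iab_split, h2]
    ring
  -- first sum : reindex k = j + 1
  have hS2 : ∑ k ∈ Finset.Icc 2 (N + 1), (N.choose (k - 1) : ℝ) * Iab Λ (k - 2) (N + 1 - k)
      = (N : ℝ) * Iab Λ 0 (N - 1)
        + ∑ k ∈ Finset.Icc 2 N, (N.choose k : ℝ) * Iab Λ (k - 1) (N - k) := by
    have hmap : Finset.Icc 2 (N + 1) = Finset.map (addRightEmbedding 1) (Finset.Icc 1 N) := by
      rw [Finset.map_add_right_Icc]
    rw [hmap, Finset.sum_map]
    have hco : ∀ j ∈ Finset.Icc 1 N,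
        (N.choose ((addRightEmbedding 1) j - 1) : ℝ)
          * Iab Λ ((addRightEmbedding 1) j - 2) (N + 1 - (addRightEmbedding 1) j)
        = (N.choose j : ℝ) * Iab Λ (j - 1) (N - j) := by
      intro j hj
      obtain ⟨hj1, hjN⟩ := Finset.mem_Icc.mp hj
      simp only [addRightEmbedding, Function.Embedding.coeFn_mk]
      have e1 : j + 1 - 1 = j := by omega
      have e2 : j + 1 - 2 = j - 1 := by omega
      have e3 : N + 1 - (j + 1) = N - j := by omega
      rw [e1, e2, e3]
    rw [Finset.sum_congr rfl hco]
    have hins : Finset.Icc 1 N = insert 1 (Finset.Icc 2 N) := by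
      ext x; simp only [Finset.mem_Icc, Finset.mem_insert]; omega
    rw [hins, Finset.sum_insert (by simp)]
    simp
  rw [hsum, hS1, hS2]
  ring

lemma lamsum_step_le (N : ℕ) (hN : 2 ≤ N) :
    ((N : ℝ) - 1) * lamsum Λ (N + 1) ≤ ((N : ℝ) + 1) * lamsum Λ N := by
  rw [lamsum_succ Λ N hN]
  have hkey : (N : ℝ) * ((N : ℝ) - 1) * Iab Λ 0 (N - 1) ≤ 2 * lamsum Λ N := by
    have h1 : Iab Λ 0 (N - 1) ≤ Iab Λ 0 (N - 2) := by
      have : N - 1 = (N - 2) + 1 := by omega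
      rw [this]; exact Iab_mono Λ (N - 2)
    have h2 : (N.choose 2 : ℝ) * Iab Λ 0 (N - 2) ≤ lamsum Λ N := lamsum_ge Λ N hN
    have h3 : 2 * (N.choose 2 : ℝ) = (N : ℝ) * ((N : ℝ) - 1) := by
      have hd : 2 ∣ N * (N - 1) := (Nat.even_mul_pred_self N).two_dvd
      have : 2 * N.choose 2 = N * (N - 1) := by rw [Nat.choose_two_right]; omega
      have hc : ((2 * N.choose 2 : ℕ) : ℝ) = ((N * (N - 1) : ℕ) : ℝ) := by rw [this]
      push_cast [Nat.cast_sub (by omega : 1 ≤ N)] at hc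
      linarith
    have hnn : 0 ≤ Iab Λ 0 (N - 1) := Iab_nonneg Λ 0 (N - 1)
    calc (N : ℝ) * ((N : ℝ) - 1) * Iab Λ 0 (N - 1)
        = 2 * (N.choose 2 : ℝ) * Iab Λ 0 (N - 1) := by rw [h3]
      _ ≤ 2 * (N.choose 2 : ℝ) * Iab Λ 0 (N - 2) := by
          have : (0:ℝ) ≤ 2 * (N.choose 2 : ℝ) := by positivity
          exact mul_le_mul_of_nonneg_left h1 this
      _ ≤ 2 * lamsum Λ N := by linarith
  nlinarith [lamsum_nonneg Λ N]

end LambdaCoalAux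

/-- For a finite measure Λ on [0,1] and
λ_N := Σ_{k=2}^N binom(N,k) ∫ x^(k-2)(1-x)^(N-k) dΛ(x), one has, for 2 ≤ N ≤ M,
λ_N ≤ λ_M and λ_M · N(N-1) ≤ λ_N · M(M-1). -/
theorem lambdaCoal_totalRate_monotone_bounds
    (Λ : Measure ℝ) [IsFiniteMeasure Λ]
    (lam : ℕ → ℝ)
    (hlam : ∀ N : ℕ, lam N = ∑ k ∈ Finset.Icc 2 N, (N.choose k : ℝ) *
      ∫ x in Set.Icc (0:ℝ) 1, x ^ (k - 2) * (1 - x) ^ (N - k) ∂Λ) :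
    ∀ N M : ℕ, 2 ≤ N → N ≤ M →
      lam N ≤ lam M ∧
      lam M * ((N : ℝ) * ((N : ℝ) - 1)) ≤ lam N * ((M : ℝ) * ((M : ℝ) - 1)) := by
  have hls : ∀ N, lam N = LambdaCoalAux.lamsum Λ N := by
    intro N; rw [hlam N]; rfl
  intro N M hN hNM
  induction M, hNM using Nat.le_induction with
  | base => exact ⟨le_refl _, le_of_eq (by ring)⟩
  | succ M hNM IH =>
    obtain ⟨IH1, IH2⟩ := IH
    have hM2 : 2 ≤ M := le_trans hN hNM
    have hrec := LambdaCoalAux.lamsum_succ Λ M hM2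
    have hstep := LambdaCoalAux.lamsum_step_le Λ M hM2
    constructor
    · have hnn : (0:ℝ) ≤ (M : ℝ) * LambdaCoalAux.Iab Λ 0 (M - 1) :=
        mul_nonneg (Nat.cast_nonneg _) (LambdaCoalAux.Iab_nonneg Λ 0 (M - 1))
      calc lam N ≤ lam M := IH1
        _ = LambdaCoalAux.lamsum Λ M := hls M
        _ ≤ LambdaCoalAux.lamsum Λ (M + 1) := by rw [hrec]; linarith
        _ = lam (M + 1) := (hls (M + 1)).symm
    · rw [hls N, hls (M + 1)]
      rw [hls N, hls M] at IH2
      have hNN : (0:ℝ) ≤ (N : ℝ) * ((N : ℝ) - 1) := by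
        have : (2:ℝ) ≤ (N : ℝ) := by exact_mod_cast hN
        nlinarith
      have hM1 : (0:ℝ) < (M : ℝ) - 1 := by
        have : (2:ℝ) ≤ (M : ℝ) := by exact_mod_cast hM2
        linarith
      have h1 : ((M : ℝ) - 1) * (LambdaCoalAux.lamsum Λ (M + 1) * ((N : ℝ) * ((N : ℝ) - 1)))
          ≤ ((M : ℝ) - 1) * (LambdaCoalAux.lamsum Λ N * (((M : ℝ) + 1) * (M : ℝ))) := by
        calc ((M : ℝ) - 1) * (LambdaCoalAux.lamsum Λ (M + 1) * ((N : ℝ) * ((N : ℝ) - 1)))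
            = (((M : ℝ) - 1) * LambdaCoalAux.lamsum Λ (M + 1)) * ((N : ℝ) * ((N : ℝ) - 1)) := by
              ring
          _ ≤ (((M : ℝ) + 1) * LambdaCoalAux.lamsum Λ M) * ((N : ℝ) * ((N : ℝ) - 1)) :=
              mul_le_mul_of_nonneg_right hstep hNN
          _ = ((M : ℝ) + 1) * (LambdaCoalAux.lamsum Λ M * ((N : ℝ) * ((N : ℝ) - 1))) := by ring
          _ ≤ ((M : ℝ) + 1) * (LambdaCoalAux.lamsum Λ N * ((M : ℝ) * ((M : ℝ) - 1))) := by
              have : (0:ℝ) ≤ (M : ℝ) + 1 := by positivity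
              exact mul_le_mul_of_nonneg_left IH2 this
          _ = ((M : ℝ) - 1) * (LambdaCoalAux.lamsum Λ N * (((M : ℝ) + 1) * (M : ℝ))) := by ring
      have h2 := le_of_mul_le_mul_left h1 hM1
      have hcast : ((M + 1 : ℕ) : ℝ) = (M : ℝ) + 1 := by push_cast; ring
      rw [hcast]
      calc LambdaCoalAux.lamsum Λ (M + 1) * ((N : ℝ) * ((N : ℝ) - 1))
          ≤ LambdaCoalAux.lamsum Λ N * (((M : ℝ) + 1) * (M : ℝ)) := h2
        _ = LambdaCoalAux.lamsum Λ N * (((M : ℝ) + 1) * (((M : ℝ) + 1) - 1)) := by ring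
end

section
/- Let Λ be a finite measure on the interval [0,1]. Then for all integers N and k with 2 ≤ k ≤ N, Σ_{j=2}^{N} (j)_k · binom(N,j) · ∫_{[0,1]} x^{j-2}(1-x)^{N-j} dΛ(x) = (N)_k · ∫_{[0,1]} x^{k-2} dΛ(x), where (n)_k := n(n-1)···(n-k+1) denotes the falling factorial. -/
open MeasureTheory

lemma descFactorial_choose_eq (N k i : ℕ) (h : k + i ≤ N) :
    (k + i).descFactorial k * N.choose (k + i) = N.descFactorial k * (N - k).choose i := by
  rw [Nat.descFactorial_eq_factorial_mul_choose, Nat.descFactorial_eq_factorial_mul_choose]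
  have := Nat.choose_mul (n := N) (k := k + i) (s := k) (Nat.le_add_right _ _)
  rw [Nat.mul_assoc, Nat.mul_assoc, Nat.mul_comm ((k+i).choose k), this,
    Nat.add_sub_cancel_left]

lemma pointwise_key (x : ℝ) (N k : ℕ) (hk : 2 ≤ k) (hkN : k ≤ N) :
    ∑ j ∈ Finset.Icc 2 N, (j.descFactorial k : ℝ) * (N.choose j : ℝ) *
        (x ^ (j - 2) * (1 - x) ^ (N - j))
      = (N.descFactorial k : ℝ) * x ^ (k - 2) := by
  rw [← Finset.sum_subset (Finset.Icc_subset_Icc_left hk)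
      (fun j hjm hj => by
        rw [Finset.mem_Icc] at hjm
        rw [Finset.mem_Icc, not_and_or, not_le] at hj
        rcases hj with hj | hj
        · rw [Nat.descFactorial_eq_zero_iff_lt.2 hj]; simp
        · omega)]
  rw [← Finset.Ico_add_one_right_eq_Icc, Finset.sum_Ico_eq_sum_range]
  have hNk : N + 1 - k = N - k + 1 := by omega
  rw [hNk]
  have key : ∀ i ∈ Finset.range (N - k + 1),
      ((k + i).descFactorial k : ℝ) * ((N.choose (k + i)) : ℝ) *
        (x ^ (k + i - 2) * (1 - x) ^ (N - (k + i)))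
      = (N.descFactorial k : ℝ) * x ^ (k - 2) *
        (x ^ i * (1 - x) ^ (N - k - i) * ((N - k).choose i : ℝ)) := by
    intro i hi
    rw [Finset.mem_range] at hi
    have hle : k + i ≤ N := by omega
    have h1 : (((k + i).descFactorial k : ℕ) : ℝ) * ((N.choose (k + i) : ℕ) : ℝ)
        = ((N.descFactorial k : ℕ) : ℝ) * (((N - k).choose i : ℕ) : ℝ) := by
      rw [← Nat.cast_mul, ← Nat.cast_mul, descFactorial_choose_eq N k i hle]
    have h2 : x ^ (k + i - 2) = x ^ (k - 2) * x ^ i := by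
      rw [← pow_add]; congr 1; omega
    have h3 : N - (k + i) = N - k - i := by omega
    rw [h1, h2, h3]; ring
  rw [Finset.sum_congr rfl key, ← Finset.mul_sum]
  have : ∑ i ∈ Finset.range (N - k + 1),
      x ^ i * (1 - x) ^ (N - k - i) * ((N - k).choose i : ℝ) = 1 := by
    have := add_pow x (1 - x) (N - k)
    simp only [add_sub_cancel, one_pow] at this
    exact this.symm
  rw [this, mul_one]

/-- For a finite measure Λ on [0,1] and 2 ≤ k ≤ N,
Σ_{j=2}^N (j)_k · binom(N,j) · ∫ x^(j-2)(1-x)^(N-j) dΛ(x) = (N)_k · ∫ x^(k-2) dΛ(x),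
where (n)_k is the falling factorial. -/
theorem factorial_moment_first_merger_size
    (Λ : Measure ℝ) [IsFiniteMeasure Λ] :
    ∀ N k : ℕ, 2 ≤ k → k ≤ N →
      ∑ j ∈ Finset.Icc 2 N, (j.descFactorial k : ℝ) * (N.choose j : ℝ) *
          ∫ x in Set.Icc (0:ℝ) 1, x ^ (j - 2) * (1 - x) ^ (N - j) ∂Λ
        = (N.descFactorial k : ℝ) * ∫ x in Set.Icc (0:ℝ) 1, x ^ (k - 2) ∂Λ := by
  intro N k hk hkN
  have hint : ∀ j : ℕ, IntegrableOn
      (fun x : ℝ => (j.descFactorial k : ℝ) * (N.choose j : ℝ) *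
        (x ^ (j - 2) * (1 - x) ^ (N - j))) (Set.Icc (0:ℝ) 1) Λ := by
    intro j
    exact (Continuous.continuousOn (by continuity)).integrableOn_compact isCompact_Icc
  calc
    ∑ j ∈ Finset.Icc 2 N, (j.descFactorial k : ℝ) * (N.choose j : ℝ) *
          ∫ x in Set.Icc (0:ℝ) 1, x ^ (j - 2) * (1 - x) ^ (N - j) ∂Λ
      = ∑ j ∈ Finset.Icc 2 N, ∫ x in Set.Icc (0:ℝ) 1,
          (j.descFactorial k : ℝ) * (N.choose j : ℝ) *
            (x ^ (j - 2) * (1 - x) ^ (N - j)) ∂Λ := by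
        refine Finset.sum_congr rfl fun j _ => ?_
        rw [MeasureTheory.integral_const_mul]
    _ = ∫ x in Set.Icc (0:ℝ) 1, ∑ j ∈ Finset.Icc 2 N,
          (j.descFactorial k : ℝ) * (N.choose j : ℝ) *
            (x ^ (j - 2) * (1 - x) ^ (N - j)) ∂Λ := by
        rw [MeasureTheory.integral_finset_sum _ (fun j _ => hint j)]
    _ = ∫ x in Set.Icc (0:ℝ) 1, (N.descFactorial k : ℝ) * x ^ (k - 2) ∂Λ := by
        refine integral_congr_ae (Filter.Eventually.of_forall fun x => ?_)
        exact pointwise_key x N k hk hkN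
    _ = (N.descFactorial k : ℝ) * ∫ x in Set.Icc (0:ℝ) 1, x ^ (k - 2) ∂Λ :=
        MeasureTheory.integral_const_mul _ _
end

section
/- Let Λ be a finite measure on the interval [0,1] and for each integer N ≥ 2 define λ_N := Σ_{k=2}^{N} binom(N,k) ∫_{[0,1]} x^{k-2}(1-x)^{N-k} dΛ(x). Then the sequence (λ_N)_{N≥2} is nondecreasing and lim_{N→∞} λ_N = ∫_{[0,1]} x^{-2} dΛ(x) in the extended nonnegative reals, where x^{-2} is interpreted as +∞ at x = 0; in particular λ_N → ∞ as N → ∞ if and only if ∫_{[0,1]} x^{-2} dΛ(x) = ∞. -/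
open MeasureTheory Filter Topology
open scoped ENNReal

/-- The real-valued total-rate integrand. -/
noncomputable def fCoal (N : ℕ) (x : ℝ) : ℝ :=
  ∑ k ∈ Finset.Icc 2 N, (N.choose k : ℝ) * (x ^ (k - 2) * (1 - x) ^ (N - k))

lemma fCoal_measurable (N : ℕ) : Measurable (fCoal N) := by
  unfold fCoal
  exact Finset.measurable_sum _ fun k _ =>
    (measurable_const.mul ((measurable_id.pow_const _).mul
      ((measurable_const.sub measurable_id).pow_const _)))

lemma fCoal_zero (N : ℕ) : fCoal N 0 = (N.choose 2 : ℝ) := by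
  unfold fCoal
  rw [Finset.sum_eq_single 2]
  · norm_num
  · intro b hb hne
    have hb2 : 2 < b := by
      rcases Finset.mem_Icc.mp hb with ⟨h1, _⟩; omega
    rw [zero_pow (by omega : b - 2 ≠ 0)]
    ring
  · intro h
    have : N < 2 := by
      by_contra hN
      exact h (Finset.mem_Icc.mpr ⟨le_refl 2, by omega⟩)
    rw [Nat.choose_eq_zero_of_lt this]
    norm_num

lemma fCoal_mul (N : ℕ) (hN : 2 ≤ N) (x : ℝ) :
    x ^ 2 * fCoal N x = 1 - (1 - x) ^ N - N * x * (1 - x) ^ (N - 1) := by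
  have h1 : x ^ 2 * fCoal N x
      = ∑ k ∈ Finset.Icc 2 N, x ^ k * (1 - x) ^ (N - k) * (N.choose k : ℝ) := by
    rw [fCoal, Finset.mul_sum]
    refine Finset.sum_congr rfl fun k hk => ?_
    have hk2 : 2 ≤ k := (Finset.mem_Icc.mp hk).1
    have hx : x ^ k = x ^ 2 * x ^ (k - 2) := by
      rw [← pow_add]; congr 1; omega
    rw [hx]; ring
  have h2 : ∑ k ∈ Finset.range (N + 1), x ^ k * (1 - x) ^ (N - k) * (N.choose k : ℝ) = 1 := by
    rw [← add_pow]; norm_num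
  have hsplit : Finset.range (N + 1) = insert 0 (insert 1 (Finset.Icc 2 N)) := by
    ext k; simp only [Finset.mem_range, Finset.mem_insert, Finset.mem_Icc]; omega
  rw [hsplit, Finset.sum_insert (by simp), Finset.sum_insert (by simp)] at h2
  simp only [pow_zero, Nat.sub_zero, Nat.choose_zero_right, Nat.cast_one, mul_one, one_mul,
    pow_one, Nat.choose_one_right] at h2
  rw [h1]
  linarith

lemma fCoal_eq (N : ℕ) (hN : 2 ≤ N) {x : ℝ} (hx : x ≠ 0) :
    fCoal N x = (1 - (1 - x) ^ N - N * x * (1 - x) ^ (N - 1)) / x ^ 2 := by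
  rw [eq_div_iff (pow_ne_zero 2 hx)]
  linear_combination fCoal_mul N hN x

lemma fCoal_mono_step (N : ℕ) (hN : 2 ≤ N) {x : ℝ} (hx : x ∈ Set.Icc (0:ℝ) 1) :
    fCoal N x ≤ fCoal (N + 1) x := by
  rcases eq_or_lt_of_le hx.1 with h0 | h0
  · rw [← h0, fCoal_zero, fCoal_zero]
    exact_mod_cast Nat.choose_le_choose 2 (Nat.le_succ N)
  · obtain ⟨m, rfl⟩ : ∃ m, N = m + 2 := ⟨N - 2, by omega⟩
    rw [fCoal_eq _ hN h0.ne', fCoal_eq _ (by omega) h0.ne']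
    have h1 : (m + 2 : ℕ) - 1 = m + 1 := by omega
    have h2 : (m + 2 + 1 : ℕ) - 1 = m + 2 := by omega
    rw [h1, h2]
    have hy : (0:ℝ) ≤ 1 - x := by linarith [hx.2]
    have hnn : (0:ℝ) ≤ ((m:ℝ) + 2) * x ^ 2 * (1 - x) ^ (m + 1) :=
      mul_nonneg (mul_nonneg (by positivity) (sq_nonneg x)) (pow_nonneg hy _)
    have heq : (1 - (1 - x) ^ (m + 2 + 1) - ((m + 2 + 1 : ℕ) : ℝ) * x * (1 - x) ^ (m + 2))
        = (1 - (1 - x) ^ (m + 2) - ((m + 2 : ℕ) : ℝ) * x * (1 - x) ^ (m + 1))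
          + ((m:ℝ) + 2) * x ^ 2 * (1 - x) ^ (m + 1) := by
      push_cast; ring
    rw [div_le_div_iff_of_pos_right (by positivity : (0:ℝ) < x ^ 2)]
    linarith

/-- In `ℝ≥0∞`, `a ^ (-2 : ℤ) = (a ^ 2)⁻¹`. -/
lemma zpow_neg_two (a : ℝ≥0∞) : a ^ (-2 : ℤ) = (a ^ 2)⁻¹ := by
  rw [show (-2 : ℤ) = Int.negSucc 1 from rfl, zpow_negSucc]

lemma choose_lower (N : ℕ) : N + 1 ≤ (N + 2).choose 2 := by
  rw [Nat.choose_two_right]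
  have h : N + 2 - 1 = N + 1 := by omega
  rw [h, Nat.le_div_iff_mul_le (by norm_num)]
  nlinarith

lemma fCoal_tendsto {x : ℝ} (hx : x ∈ Set.Icc (0:ℝ) 1) :
    Tendsto (fun N : ℕ => ENNReal.ofReal (fCoal (N + 2) x)) atTop
      (𝓝 ((ENNReal.ofReal x) ^ (-2 : ℤ))) := by
  rcases eq_or_lt_of_le hx.1 with h0 | h0
  · -- x = 0
    have htarget : (ENNReal.ofReal x) ^ (-2 : ℤ) = ⊤ := by
      rw [← h0, ENNReal.ofReal_zero, zpow_neg_two]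
      simp
    rw [htarget]
    have hval : ∀ N : ℕ, ENNReal.ofReal (fCoal (N + 2) x)
        = (((N + 2).choose 2 : ℕ) : ℝ≥0∞) := by
      intro N
      rw [← h0, fCoal_zero, ENNReal.ofReal_natCast]
    simp only [hval]
    rw [ENNReal.tendsto_nhds_top_iff_nat]
    intro n
    filter_upwards [eventually_ge_atTop n] with N hN
    exact_mod_cast lt_of_lt_of_le (by omega : n < N + 1) (choose_lower N)
  · -- 0 < x
    have hy0 : (0:ℝ) ≤ 1 - x := by linarith [hx.2]
    have hy1 : 1 - x < 1 := by linarith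
    have hpow : Tendsto (fun N : ℕ => (1 - x) ^ N) atTop (𝓝 0) :=
      tendsto_pow_atTop_nhds_zero_of_lt_one hy0 hy1
    have hmul : Tendsto (fun N : ℕ => (N : ℝ) * (1 - x) ^ N) atTop (𝓝 0) :=
      tendsto_self_mul_const_pow_of_lt_one hy0 hy1
    have h1 : Tendsto (fun N : ℕ => (1 - x) ^ (N + 2)) atTop (𝓝 0) :=
      hpow.comp (tendsto_add_atTop_nat 2)
    have ha : Tendsto (fun N : ℕ => ((N + 1 : ℕ) : ℝ) * (1 - x) ^ (N + 1)) atTop (𝓝 0) :=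
      hmul.comp (tendsto_add_atTop_nat 1)
    have hb : Tendsto (fun N : ℕ => (1 - x) ^ (N + 1)) atTop (𝓝 0) :=
      hpow.comp (tendsto_add_atTop_nat 1)
    have h2 : Tendsto (fun N : ℕ => ((N + 2 : ℕ) : ℝ) * (1 - x) ^ (N + 1)) atTop (𝓝 0) := by
      have := ha.add hb
      rw [add_zero] at this
      refine this.congr fun N => ?_
      push_cast; ring
    have hnum : Tendsto
        (fun N : ℕ => 1 - (1 - x) ^ (N + 2) - ((N + 2 : ℕ) : ℝ) * x * (1 - x) ^ (N + 1))
        atTop (𝓝 1) := by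
      have h3 : Tendsto (fun N : ℕ => ((N + 2 : ℕ) : ℝ) * x * (1 - x) ^ (N + 1)) atTop (𝓝 0) := by
        have := h2.mul_const x
        rw [zero_mul] at this
        refine this.congr fun N => by ring
      have hc : Tendsto (fun _ : ℕ => (1:ℝ)) atTop (𝓝 1) := tendsto_const_nhds
      have := (hc.sub h1).sub h3
      simpa using this
    have hdiv := hnum.div_const (x ^ 2)
    have hofReal := ENNReal.tendsto_ofReal hdiv
    have hcongr : ∀ N : ℕ, ENNReal.ofReal
          ((1 - (1 - x) ^ (N + 2) - ((N + 2 : ℕ) : ℝ) * x * (1 - x) ^ (N + 1)) / x ^ 2)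
        = ENNReal.ofReal (fCoal (N + 2) x) := by
      intro N
      rw [fCoal_eq (N + 2) (by omega) h0.ne']
      norm_num
    have htarget : ENNReal.ofReal (1 / x ^ 2) = (ENNReal.ofReal x) ^ (-2 : ℤ) := by
      rw [zpow_neg_two, one_div, ENNReal.ofReal_inv_of_pos (by positivity),
        ← ENNReal.ofReal_pow hx.1]
    rw [← htarget]
    exact hofReal.congr hcongr

/-- For a finite measure Λ on [0,1] and
λ_N := Σ_{k=2}^N binom(N,k) ∫ x^(k-2)(1-x)^(N-k) dΛ(x) (as extended nonnegative reals),
the sequence (λ_N)_{N≥2} is nondecreasing and λ_N → ∫ x^(-2) dΛ(x) in [0,∞]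
(x^(-2) being ∞ at x = 0); in particular λ_N → ∞ iff ∫ x^(-2) dΛ(x) = ∞. -/
theorem lambdaCoal_totalRate_tendsto_xInvSq_integral
    (Λ : Measure ℝ) [IsFiniteMeasure Λ]
    (lam : ℕ → ℝ≥0∞)
    (hlam : ∀ N : ℕ, lam N = ∑ k ∈ Finset.Icc 2 N, (N.choose k : ℝ≥0∞) *
      ∫⁻ x in Set.Icc (0:ℝ) 1, ENNReal.ofReal (x ^ (k - 2) * (1 - x) ^ (N - k)) ∂Λ) :
    (∀ N M : ℕ, 2 ≤ N → N ≤ M → lam N ≤ lam M) ∧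
    Tendsto lam atTop
      (𝓝 (∫⁻ x in Set.Icc (0:ℝ) 1, (ENNReal.ofReal x) ^ (-2 : ℤ) ∂Λ)) ∧
    (Tendsto lam atTop (𝓝 ⊤) ↔
      (∫⁻ x in Set.Icc (0:ℝ) 1, (ENNReal.ofReal x) ^ (-2 : ℤ) ∂Λ) = ⊤) := by
  have hterm_meas : ∀ N k : ℕ, Measurable
      (fun x : ℝ => ENNReal.ofReal (x ^ (k - 2) * (1 - x) ^ (N - k))) := by
    intro N k
    exact ENNReal.measurable_ofReal.comp
      ((measurable_id.pow_const _).mul ((measurable_const.sub measurable_id).pow_const _))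
  -- rewrite lam as a single integral
  have hrw : ∀ N : ℕ, lam N = ∫⁻ x in Set.Icc (0:ℝ) 1, ENNReal.ofReal (fCoal N x) ∂Λ := by
    intro N
    rw [hlam N]
    have step1 : ∀ k ∈ Finset.Icc 2 N, (N.choose k : ℝ≥0∞) *
        ∫⁻ x in Set.Icc (0:ℝ) 1, ENNReal.ofReal (x ^ (k - 2) * (1 - x) ^ (N - k)) ∂Λ
        = ∫⁻ x in Set.Icc (0:ℝ) 1,
            (N.choose k : ℝ≥0∞) * ENNReal.ofReal (x ^ (k - 2) * (1 - x) ^ (N - k)) ∂Λ := by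
      intro k _
      exact (lintegral_const_mul _ (hterm_meas N k)).symm
    rw [Finset.sum_congr rfl step1, ← lintegral_finset_sum _
      (fun k _ => (hterm_meas N k).const_mul _)]
    refine setLIntegral_congr_fun_ae measurableSet_Icc (ae_of_all _ fun x hx => ?_) |>.symm
    have hnn : ∀ k ∈ Finset.Icc 2 N,
        0 ≤ (N.choose k : ℝ) * (x ^ (k - 2) * (1 - x) ^ (N - k)) := fun k _ =>
      mul_nonneg (by positivity)
        (mul_nonneg (pow_nonneg hx.1 _) (pow_nonneg (by linarith [hx.2]) _))
    rw [fCoal, ENNReal.ofReal_sum_of_nonneg hnn]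
    refine Finset.sum_congr rfl fun k hk => ?_
    rw [ENNReal.ofReal_mul (by positivity), ENNReal.ofReal_natCast]
  have hmono : ∀ N M : ℕ, 2 ≤ N → N ≤ M → lam N ≤ lam M := by
    intro N M hN hNM
    induction M, hNM using Nat.le_induction with
    | base => exact le_rfl
    | succ M hM ih =>
      refine le_trans ih ?_
      rw [hrw M, hrw (M + 1)]
      refine setLIntegral_mono (ENNReal.measurable_ofReal.comp (fCoal_measurable (M + 1)))
        fun x hx => ?_
      exact ENNReal.ofReal_le_ofReal (fCoal_mono_step M (le_trans hN hM) hx)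
  have hT : Tendsto lam atTop
      (𝓝 (∫⁻ x in Set.Icc (0:ℝ) 1, (ENNReal.ofReal x) ^ (-2 : ℤ) ∂Λ)) := by
    rw [← tendsto_add_atTop_iff_nat 2]
    have key := lintegral_tendsto_of_tendsto_of_monotone
      (f := fun n (x : ℝ) => ENNReal.ofReal (fCoal (n + 2) x))
      (F := fun x : ℝ => (ENNReal.ofReal x) ^ (-2 : ℤ))
      (μ := Λ.restrict (Set.Icc (0:ℝ) 1))
      (fun n => (ENNReal.measurable_ofReal.comp (fCoal_measurable (n + 2))).aemeasurable)
      ?_ ?_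
    · exact key.congr fun n => (hrw (n + 2)).symm
    · refine (ae_restrict_iff' measurableSet_Icc).2 (ae_of_all _ fun x hx => ?_)
      exact monotone_nat_of_le_succ fun n =>
        ENNReal.ofReal_le_ofReal (fCoal_mono_step (n + 2) (by omega) hx)
    · refine (ae_restrict_iff' measurableSet_Icc).2 (ae_of_all _ fun x hx => ?_)
      exact fCoal_tendsto hx
  refine ⟨hmono, hT, ?_⟩
  constructor
  · intro h
    exact (tendsto_nhds_unique h hT).symm
  · intro h
    rw [h] at hT
    exact hT
end

section
/- Let 0 < a < 2 and b > 0, and let Λ be the Beta(a,b) probability measure on [0,1], i.e. the measure with density x ↦ x^{a−1}(1−x)^{b−1}·Γ(a+b)/(Γ(a)Γ(b)) with respect to Lebesgue measure on [0,1]. For each integer N ≥ 2 define λ_N := Σ_{k=2}^{N} binom(N,k) ∫_{[0,1]} x^{k-2}(1-x)^{N-k} dΛ(x). Then lim_{N→∞} N^{2−a}·λ_N^{-1} = (2−a)·Γ(b)/Γ(a+b); equivalently, the coalescence probability c_N = λ_N^{-1} of the associated modified Moran model satisfies c_N ∼ ((2−a)Γ(b)/Γ(a+b))·N^{a−2}.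 -/
open MeasureTheory Filter Topology
open scoped ENNReal NNReal



lemma aux_geom (y : ℝ) (N : ℕ) :
    (1 - y) ^ 2 * ∑ m ∈ Finset.range N, (m : ℝ) * y ^ (m - 1)
      = 1 - y ^ N - N * (1 - y) * y ^ (N - 1) := by
  induction N with
  | zero => simp
  | succ n ih =>
    rw [Finset.sum_range_succ, mul_add, ih]
    cases n with
    | zero => simp
    | succ k =>
      simp only [Nat.succ_sub_one, Nat.cast_add, Nat.cast_one]
      ring

lemma aux_identity (x : ℝ) (hx : x ≠ 0) (N : ℕ) (hN : 2 ≤ N) :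
    ∑ k ∈ Finset.Icc 2 N, (N.choose k : ℝ) * (x ^ (k - 2) * (1 - x) ^ (N - k))
      = ∑ m ∈ Finset.range N, (m : ℝ) * (1 - x) ^ (m - 1) := by
  have hx2 : x ^ 2 ≠ 0 := pow_ne_zero 2 hx
  apply mul_left_cancel₀ hx2
  rw [Finset.mul_sum]
  have h1 : ∀ k ∈ Finset.Icc 2 N, x ^ 2 * ((N.choose k : ℝ) * (x ^ (k - 2) * (1 - x) ^ (N - k)))
      = (N.choose k : ℝ) * (x ^ k * (1 - x) ^ (N - k)) := by
    intro k hk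
    rw [Finset.mem_Icc] at hk
    have : x ^ 2 * x ^ (k - 2) = x ^ k := by
      rw [← pow_add]; congr 1; omega
    rw [← this]; ring
  rw [Finset.sum_congr rfl h1]
  have hsplit : Finset.range (N + 1) = insert 0 (insert 1 (Finset.Icc 2 N)) := by
    ext j
    simp only [Finset.mem_range, Finset.mem_insert, Finset.mem_Icc]
    omega
  have hadd : ∑ k ∈ Finset.range (N + 1), (N.choose k : ℝ) * (x ^ k * (1 - x) ^ (N - k)) = 1 := by
    calc ∑ k ∈ Finset.range (N + 1), (N.choose k : ℝ) * (x ^ k * (1 - x) ^ (N - k))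
        = ∑ k ∈ Finset.range (N + 1), x ^ k * (1 - x) ^ (N - k) * (N.choose k : ℝ) :=
          Finset.sum_congr rfl (fun k _ => by ring)
      _ = (x + (1 - x)) ^ N := (add_pow x (1 - x) N).symm
      _ = 1 := by rw [add_sub_cancel, one_pow]
  rw [hsplit] at hadd
  rw [Finset.sum_insert (by simp), Finset.sum_insert (by simp)] at hadd
  have h0 : (N.choose 0 : ℝ) * (x ^ 0 * (1 - x) ^ (N - 0)) = (1 - x) ^ N := by simp
  have h1' : (N.choose 1 : ℝ) * (x ^ 1 * (1 - x) ^ (N - 1)) = N * x * (1 - x) ^ (N - 1) := by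
    simp [Nat.choose_one_right]; ring
  rw [h0, h1'] at hadd
  have key : ∑ k ∈ Finset.Icc 2 N, (N.choose k : ℝ) * (x ^ k * (1 - x) ^ (N - k))
      = 1 - (1 - x) ^ N - N * x * (1 - x) ^ (N - 1) := by linarith
  rw [key]
  have := aux_geom (1 - x) N
  simp only [sub_sub_cancel] at this
  linarith



lemma aux_beta_integrable {p q : ℝ} (hp : 0 < p) (hq : 0 < q) :
    IntegrableOn (fun x : ℝ => x ^ (p - 1) * (1 - x) ^ (q - 1)) (Set.Ioo 0 1) := by
  have h := (Complex.betaIntegral_convergent (u := (p : ℂ)) (v := (q : ℂ))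
    (by simpa using hp) (by simpa using hq)).1
  have h2 : IntegrableOn (fun x : ℝ =>
      ((x : ℂ) ^ ((p : ℂ) - 1) * (1 - (x : ℂ)) ^ ((q : ℂ) - 1)).re) (Set.Ioc 0 1) := h.re
  refine (h2.mono_set Set.Ioo_subset_Ioc_self).congr_fun ?_ measurableSet_Ioo
  intro x hx
  obtain ⟨hx0, hx1⟩ := hx
  have e1 : (x : ℂ) ^ ((p : ℂ) - 1) = ((x ^ (p - 1) : ℝ) : ℂ) := by
    rw [Complex.ofReal_cpow hx0.le]; push_cast; ring_nf
  have e2 : (1 - (x : ℂ)) ^ ((q : ℂ) - 1) = (((1 - x) ^ (q - 1) : ℝ) : ℂ) := by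
    rw [show (1 - (x : ℂ)) = (((1 - x : ℝ)) : ℂ) by push_cast; ring,
      Complex.ofReal_cpow (by linarith)]
    push_cast; ring_nf
  simp only [e1, e2, ← Complex.ofReal_mul, Complex.ofReal_re]

lemma aux_beta_eval {p q : ℝ} (hp : 0 < p) (hq : 0 < q) :
    ∫ x in Set.Ioo (0:ℝ) 1, x ^ (p - 1) * (1 - x) ^ (q - 1)
      = Real.Gamma p * Real.Gamma q / Real.Gamma (p + q) := by
  have hgc := Complex.Gamma_mul_Gamma_eq_betaIntegral
    (s := (p : ℂ)) (t := (q : ℂ)) (by simpa using hp) (by simpa using hq)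
  have hB : Complex.betaIntegral (p : ℂ) (q : ℂ)
      = ((∫ x in Set.Ioo (0:ℝ) 1, x ^ (p - 1) * (1 - x) ^ (q - 1) : ℝ) : ℂ) := by
    rw [Complex.betaIntegral, intervalIntegral.integral_of_le zero_le_one,
      integral_Ioc_eq_integral_Ioo]
    rw [show ((∫ x in Set.Ioo (0:ℝ) 1, x ^ (p - 1) * (1 - x) ^ (q - 1) : ℝ) : ℂ)
      = ∫ x in Set.Ioo (0:ℝ) 1, ((x ^ (p - 1) * (1 - x) ^ (q - 1) : ℝ) : ℂ) from
      (integral_ofReal).symm]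
    refine setIntegral_congr_fun measurableSet_Ioo ?_
    intro x hx
    obtain ⟨hx0, hx1⟩ := hx
    have e1 : (x : ℂ) ^ ((p : ℂ) - 1) = ((x ^ (p - 1) : ℝ) : ℂ) := by
      rw [Complex.ofReal_cpow hx0.le]; push_cast; ring_nf
    have e2 : (1 - (x : ℂ)) ^ ((q : ℂ) - 1) = (((1 - x) ^ (q - 1) : ℝ) : ℂ) := by
      rw [show (1 - (x : ℂ)) = (((1 - x : ℝ)) : ℂ) by push_cast; ring,
        Complex.ofReal_cpow (by linarith)]
      push_cast; ring_nf
    simp only [e1, e2, ← Complex.ofReal_mul]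
  rw [hB, Complex.Gamma_ofReal, Complex.Gamma_ofReal, ← Complex.ofReal_add,
    Complex.Gamma_ofReal, ← Complex.ofReal_mul, ← Complex.ofReal_mul] at hgc
  have := Complex.ofReal_injective hgc
  have hΓ : Real.Gamma (p + q) ≠ 0 := (Real.Gamma_pos_of_pos (by linarith)).ne'
  field_simp
  linarith [this]



lemma aux_gamma_prod (s : ℝ) (hs : 0 < s) (n : ℕ) :
    Real.Gamma (s + n) = Real.Gamma s * ∏ j ∈ Finset.range n, (s + j) := by
  induction n with
  | zero => simp
  | succ m ih =>
    rw [Finset.prod_range_succ, ← mul_assoc, ← ih,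
      show s + ((m + 1 : ℕ) : ℝ) = (s + m) + 1 by push_cast; ring,
      Real.Gamma_add_one (by positivity)]
    ring

lemma aux_gammaSeq_pos (s : ℝ) (hs : 0 < s) (n : ℕ) (hn : 1 ≤ n) : 0 < Real.GammaSeq s n := by
  apply div_pos
  · apply mul_pos
    · exact Real.rpow_pos_of_pos (by exact_mod_cast hn) s
    · exact_mod_cast Nat.factorial_pos n
  · exact Finset.prod_pos fun j _ => by positivity

lemma aux_gamma_eq (s : ℝ) (hs : 0 < s) (n : ℕ) (hn : 1 ≤ n) :
    Real.Gamma (s + n + 1) = (n : ℝ) ^ s * n.factorial * Real.Gamma s / Real.GammaSeq s n := by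
  have h1 : Real.Gamma (s + n + 1) = Real.Gamma s * ∏ j ∈ Finset.range (n + 1), (s + j) := by
    rw [show s + n + 1 = s + ((n + 1 : ℕ) : ℝ) by push_cast; ring]
    exact aux_gamma_prod s hs (n + 1)
  have hprod : ∏ j ∈ Finset.range (n + 1), (s + (j : ℝ)) ≠ 0 :=
    (Finset.prod_pos fun j _ => by positivity).ne'
  rw [h1, Real.GammaSeq]
  field_simp

lemma aux_gamma_ratio (s t : ℝ) (hs : 0 < s) (ht : 0 < t) :
    Tendsto (fun n : ℕ => (n : ℝ) ^ t * Real.Gamma (s + n + 1) / Real.Gamma (s + t + n + 1))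
      atTop (𝓝 1) := by
  have hG : Tendsto (fun n : ℕ => Real.Gamma s / Real.Gamma (s + t)
      * (Real.GammaSeq (s + t) n / Real.GammaSeq s n)) atTop (𝓝 1) := by
    have h := ((Real.GammaSeq_tendsto_Gamma (s + t)).div (Real.GammaSeq_tendsto_Gamma s)
      (Real.Gamma_pos_of_pos hs).ne').const_mul (Real.Gamma s / Real.Gamma (s + t))
    have : Real.Gamma s / Real.Gamma (s + t)
        * (Real.Gamma (s + t) / Real.Gamma s) = 1 := by
      field_simp
    rwa [this] at h
  refine hG.congr' ?_
  filter_upwards [eventually_ge_atTop 1] with n hn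
  have hnR : (0 : ℝ) < n := by exact_mod_cast hn
  rw [aux_gamma_eq s hs n hn, aux_gamma_eq (s + t) (by linarith) n hn]
  have h1 : Real.GammaSeq s n ≠ 0 := (aux_gammaSeq_pos s hs n hn).ne'
  have h2 : Real.GammaSeq (s + t) n ≠ 0 := (aux_gammaSeq_pos (s + t) (by linarith) n hn).ne'
  have hst : (n : ℝ) ^ (s + t) = (n : ℝ) ^ s * (n : ℝ) ^ t := Real.rpow_add hnR s t
  have hf : (n.factorial : ℝ) ≠ 0 := by exact_mod_cast n.factorial_pos.ne'
  have hrs : (n : ℝ) ^ s ≠ 0 := (Real.rpow_pos_of_pos hnR s).ne'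
  have hΓs : Real.Gamma s ≠ 0 := (Real.Gamma_pos_of_pos hs).ne'
  have hΓst : Real.Gamma (s + t) ≠ 0 := (Real.Gamma_pos_of_pos (by linarith)).ne'
  rw [hst]
  field_simp



lemma aux_pow_sum {a : ℝ} (ha : 0 < a) (ha2 : a < 2) :
    Tendsto (fun N : ℕ => (N : ℝ) ^ (a - 2) * ∑ m ∈ Finset.range N, (m : ℝ) ^ (1 - a))
      atTop (𝓝 (1 / (2 - a))) := by
  set p : ℝ := 1 - a with hp_def
  have hp : -1 < p := by simp [hp_def]; linarith
  have hp1 : 0 < p + 1 := by linarith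
  set A : ℕ → ℝ := fun n => ∑ i ∈ Finset.range n, ((i : ℝ) + 1) ^ p with hA
  -- adjacent interval sums
  have hadj : ∀ n : ℕ, ∑ i ∈ Finset.range n, ∫ t in ((i : ℝ) + 1)..((i : ℝ) + 2), t ^ p
      = ∫ t in (1 : ℝ)..((n : ℝ) + 1), t ^ p := by
    intro n
    have := intervalIntegral.sum_integral_adjacent_intervals (a := fun k : ℕ => (k : ℝ) + 1)
      (f := fun t : ℝ => t ^ p) (μ := volume) (n := n)
      (fun k _ => intervalIntegral.intervalIntegrable_rpow' hp)
    simp only [Nat.cast_zero, zero_add] at this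
    rw [← this]
    apply Finset.sum_congr rfl
    intro i _
    congr 1
    push_cast; ring
  have hval : ∀ n : ℕ, ∫ t in (1 : ℝ)..((n : ℝ) + 1), t ^ p
      = (((n : ℝ) + 1) ^ (p + 1) - 1) / (p + 1) := by
    intro n
    rw [integral_rpow (Or.inl hp), Real.one_rpow]
  -- pointwise integral comparisons
  have hcle : ∀ i : ℕ, (0 : ℝ) < (i : ℝ) + 1 := fun i => by positivity
  have hmono_up : ∀ i : ℕ, 0 ≤ p →
      ((i : ℝ) + 1) ^ p ≤ ∫ t in ((i : ℝ) + 1)..((i : ℝ) + 2), t ^ p := by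
    intro i hp0
    have h := intervalIntegral.integral_mono_on (μ := volume)
      (f := fun _ : ℝ => ((i : ℝ) + 1) ^ p) (g := fun t : ℝ => t ^ p)
      (by linarith [hcle i] : ((i : ℝ) + 1) ≤ (i : ℝ) + 2)
      intervalIntegrable_const (intervalIntegral.intervalIntegrable_rpow' hp)
      (fun t ht => Real.rpow_le_rpow (hcle i).le ht.1 hp0)
    norm_num at h
    exact h
  have hmono_dn : ∀ i : ℕ, 0 ≤ p →
      (∫ t in ((i : ℝ) + 1)..((i : ℝ) + 2), t ^ p) ≤ ((i : ℝ) + 2) ^ p := by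
    intro i hp0
    have h := intervalIntegral.integral_mono_on (μ := volume)
      (f := fun t : ℝ => t ^ p) (g := fun _ : ℝ => ((i : ℝ) + 2) ^ p)
      (by linarith [hcle i] : ((i : ℝ) + 1) ≤ (i : ℝ) + 2)
      (intervalIntegral.intervalIntegrable_rpow' hp) intervalIntegrable_const
      (fun t ht => Real.rpow_le_rpow (by linarith [(hcle i).le, ht.1]) ht.2 hp0)
    norm_num at h
    exact h
  have hmono_up' : ∀ i : ℕ, p < 0 →
      (∫ t in ((i : ℝ) + 1)..((i : ℝ) + 2), t ^ p) ≤ ((i : ℝ) + 1) ^ p := by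
    intro i hp0
    have h := intervalIntegral.integral_mono_on (μ := volume)
      (f := fun t : ℝ => t ^ p) (g := fun _ : ℝ => ((i : ℝ) + 1) ^ p)
      (by linarith [hcle i] : ((i : ℝ) + 1) ≤ (i : ℝ) + 2)
      (intervalIntegral.intervalIntegrable_rpow' hp) intervalIntegrable_const
      (fun t ht => Real.rpow_le_rpow_of_nonpos (hcle i) ht.1 hp0.le)
    norm_num at h
    exact h
  have hmono_dn' : ∀ i : ℕ, p < 0 →
      ((i : ℝ) + 2) ^ p ≤ ∫ t in ((i : ℝ) + 1)..((i : ℝ) + 2), t ^ p := by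
    intro i hp0
    have h := intervalIntegral.integral_mono_on (μ := volume)
      (f := fun _ : ℝ => ((i : ℝ) + 2) ^ p) (g := fun t : ℝ => t ^ p)
      (by linarith [hcle i] : ((i : ℝ) + 1) ≤ (i : ℝ) + 2)
      intervalIntegrable_const (intervalIntegral.intervalIntegrable_rpow' hp)
      (fun t ht => Real.rpow_le_rpow_of_nonpos
        (lt_of_lt_of_le (hcle i) ht.1) ht.2 hp0.le)
    norm_num at h
    exact h
  -- A (n+1) = (shifted sum) + 1
  have hAshift : ∀ n : ℕ, A (n + 1) = (∑ i ∈ Finset.range n, ((i : ℝ) + 2) ^ p) + 1 := by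
    intro n
    show (∑ i ∈ Finset.range (n + 1), ((i : ℝ) + 1) ^ p) = _
    rw [Finset.sum_range_succ']
    congr 1
    · apply Finset.sum_congr rfl
      intro i _
      congr 1
      push_cast; ring
    · simp [Real.one_rpow]
  -- bounds on A
  have hAu : ∀ n : ℕ, A n ≤ 1 + (((n : ℝ) + 1) ^ (p + 1) - 1) / (p + 1) := by
    intro n
    rcases le_or_gt 0 p with hp0 | hp0
    · have h1 : A n ≤ ∑ i ∈ Finset.range n, ∫ t in ((i : ℝ) + 1)..((i : ℝ) + 2), t ^ p :=
        Finset.sum_le_sum fun i _ => hmono_up i hp0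
      rw [hadj n, hval n] at h1
      linarith
    · cases n with
      | zero => simp [hA, Real.one_rpow]
      | succ m =>
        have h1 : (∑ i ∈ Finset.range m, ((i : ℝ) + 2) ^ p)
            ≤ ∑ i ∈ Finset.range m, ∫ t in ((i : ℝ) + 1)..((i : ℝ) + 2), t ^ p :=
          Finset.sum_le_sum fun i _ => hmono_dn' i hp0
        rw [hadj m, hval m] at h1
        have h2 := hAshift m
        have h3 : ((m : ℝ) + 1) ^ (p + 1) ≤ (((m + 1 : ℕ) : ℝ) + 1) ^ (p + 1) := by
          apply Real.rpow_le_rpow (by positivity) _ hp1.le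
          push_cast; linarith
        have h4 : (((m : ℝ) + 1) ^ (p + 1) - 1) / (p + 1)
            ≤ ((((m + 1 : ℕ) : ℝ) + 1) ^ (p + 1) - 1) / (p + 1) := by
          gcongr
        linarith
  have hAl : ∀ n : ℕ, ((n : ℝ) ^ (p + 1) - 1) / (p + 1) ≤ A n := by
    intro n
    rcases le_or_gt 0 p with hp0 | hp0
    · cases n with
      | zero =>
        simp only [Nat.cast_zero, hA, Finset.range_zero, Finset.sum_empty]
        rw [Real.zero_rpow hp1.ne']
        rw [div_nonpos_iff]
        right; constructor <;> linarith
      | succ m =>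
        have h1 : (∑ i ∈ Finset.range m, ∫ t in ((i : ℝ) + 1)..((i : ℝ) + 2), t ^ p)
            ≤ ∑ i ∈ Finset.range m, ((i : ℝ) + 2) ^ p :=
          Finset.sum_le_sum fun i _ => hmono_dn i hp0
        rw [hadj m, hval m] at h1
        have h2 := hAshift m
        have : (((m + 1 : ℕ) : ℝ)) ^ (p + 1) = ((m : ℝ) + 1) ^ (p + 1) := by push_cast; ring_nf
        rw [this]
        linarith
    · have h1 : A n ≥ ∑ i ∈ Finset.range n, ∫ t in ((i : ℝ) + 1)..((i : ℝ) + 2), t ^ p :=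
        Finset.sum_le_sum fun i _ => hmono_up' i hp0
      rw [hadj n, hval n] at h1
      have h3 : (n : ℝ) ^ (p + 1) ≤ ((n : ℝ) + 1) ^ (p + 1) :=
        Real.rpow_le_rpow (Nat.cast_nonneg n) (by linarith) hp1.le
      have h4 : ((n : ℝ) ^ (p + 1) - 1) / (p + 1) ≤ (((n : ℝ) + 1) ^ (p + 1) - 1) / (p + 1) := by
        gcongr
      linarith
  -- bounds on S
  set S : ℕ → ℝ := fun N => ∑ m ∈ Finset.range N, (m : ℝ) ^ p with hS
  have hSshift : ∀ n : ℕ, S (n + 1) = A n + (0 : ℝ) ^ p := by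
    intro n
    show (∑ m ∈ Finset.range (n + 1), (m : ℝ) ^ p) = _
    rw [Finset.sum_range_succ']
    simp only [Nat.cast_zero]
    congr 1
    apply Finset.sum_congr rfl
    intro i _
    congr 1
    push_cast; ring
  have h0p1 : (0 : ℝ) ^ p ≤ 1 := Real.zero_rpow_le_one p
  have h0p0 : 0 ≤ (0 : ℝ) ^ p := Real.rpow_nonneg le_rfl p
  -- eventual bounds on the scaled sum
  have hNpos : ∀ N : ℕ, 1 ≤ N → (0 : ℝ) < (N : ℝ) := fun N hN => by exact_mod_cast hN
  have e1 : ∀ N : ℕ, 1 ≤ N → (N : ℝ) ^ (a - 2) * (N : ℝ) ^ (p + 1) = 1 := by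
    intro N hN
    rw [← Real.rpow_add (hNpos N hN)]
    rw [show a - 2 + (p + 1) = 0 by rw [hp_def]; ring, Real.rpow_zero]
  have e2 : ∀ N : ℕ, 1 ≤ N →
      ((N : ℝ) - 1) ^ (p + 1) = (((N : ℝ) - 1) / (N : ℝ)) ^ (p + 1) * (N : ℝ) ^ (p + 1) := by
    intro N hN
    have h1 : (0 : ℝ) ≤ ((N : ℝ) - 1) / (N : ℝ) := by
      apply div_nonneg _ (Nat.cast_nonneg N)
      have := hNpos N hN
      have : (1 : ℝ) ≤ (N : ℝ) := by exact_mod_cast hN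
      linarith
    rw [← Real.mul_rpow h1 (Nat.cast_nonneg N), div_mul_cancel₀ _ (hNpos N hN).ne']
  -- squeeze
  have key : Tendsto (fun N : ℕ => (N : ℝ) ^ (a - 2) * S N) atTop (𝓝 (1 / (p + 1))) := by
    have t0 : Tendsto (fun N : ℕ => (N : ℝ) ^ (a - 2)) atTop (𝓝 0) := by
      have h := (tendsto_rpow_neg_atTop (by linarith : (0:ℝ) < 2 - a)).comp
        (tendsto_natCast_atTop_atTop (R := ℝ))
      simp only [Function.comp_def, show -(2 - a) = a - 2 by ring] at h
      exact h
    have t1 : Tendsto (fun N : ℕ => ((N : ℝ) - 1) / (N : ℝ)) atTop (𝓝 1) := by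
      have h := (tendsto_const_nhds (x := (1:ℝ)) (f := atTop (α := ℕ))).sub
        (tendsto_inv_atTop_zero.comp (tendsto_natCast_atTop_atTop (R := ℝ)))
      rw [sub_zero] at h
      refine h.congr' ?_
      filter_upwards [eventually_ge_atTop 1] with N hN
      have := (hNpos N hN).ne'
      simp only [Function.comp_apply]
      field_simp
    have t2 : Tendsto (fun N : ℕ => (((N : ℝ) - 1) / (N : ℝ)) ^ (p + 1)) atTop (𝓝 1) := by
      have := t1.rpow_const (p := p + 1) (Or.inl one_ne_zero)
      rwa [Real.one_rpow] at this
    -- lower and upper comparison functions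
    have tlow : Tendsto (fun N : ℕ =>
        ((((N : ℝ) - 1) / (N : ℝ)) ^ (p + 1) - (N : ℝ) ^ (a - 2)) / (p + 1))
        atTop (𝓝 (1 / (p + 1))) := by
      have := (t2.sub t0).div_const (p + 1)
      rwa [sub_zero] at this
    have tup : Tendsto (fun N : ℕ =>
        2 * (N : ℝ) ^ (a - 2) + (1 - (N : ℝ) ^ (a - 2)) / (p + 1))
        atTop (𝓝 (1 / (p + 1))) := by
      have h2 : Tendsto (fun N : ℕ =>
          2 * (N : ℝ) ^ (a - 2) + (1 - (N : ℝ) ^ (a - 2)) / (p + 1))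
          atTop (𝓝 (2 * 0 + (1 - 0) / (p + 1))) :=
        (t0.const_mul 2).add ((tendsto_const_nhds.sub t0).div_const (p + 1))
      convert h2 using 2
      norm_num
    refine tendsto_of_tendsto_of_tendsto_of_le_of_le' tlow tup ?_ ?_
    · filter_upwards [eventually_ge_atTop 1] with N hN
      have hc : (0:ℝ) ≤ (N : ℝ) ^ (a - 2) := Real.rpow_nonneg (Nat.cast_nonneg N) _
      obtain ⟨n, rfl⟩ : ∃ n, N = n + 1 := ⟨N - 1, by omega⟩
      set M := n + 1 with hM
      have hcast : (n : ℝ) = (M : ℝ) - 1 := by rw [hM]; push_cast; ring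
      have hlow0 : (((M : ℝ) - 1) ^ (p + 1) - 1) / (p + 1) ≤ S M := by
        rw [← hcast]
        linarith [hAl n, hSshift n, h0p0]
      have key1 : (M : ℝ) ^ (a - 2) * ((M : ℝ) - 1) ^ (p + 1)
          = (((M : ℝ) - 1) / (M : ℝ)) ^ (p + 1) := by
        rw [e2 M hN]
        calc (M : ℝ) ^ (a - 2) * ((((M : ℝ) - 1) / (M : ℝ)) ^ (p + 1) * (M : ℝ) ^ (p + 1))
            = (((M : ℝ) - 1) / (M : ℝ)) ^ (p + 1) * ((M : ℝ) ^ (a - 2) * (M : ℝ) ^ (p + 1)) := by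
              ring
          _ = _ := by rw [e1 M hN, mul_one]
      have h5 := mul_le_mul_of_nonneg_left hlow0 hc
      have expand : (M : ℝ) ^ (a - 2) * (((((M : ℝ) - 1) ^ (p + 1)) - 1) / (p + 1))
          = ((((M : ℝ) - 1) / (M : ℝ)) ^ (p + 1) - (M : ℝ) ^ (a - 2)) / (p + 1) := by
        linear_combination key1 / (p + 1)
      linarith [h5, expand.le, expand.ge]
    · filter_upwards [eventually_ge_atTop 1] with N hN
      have hc : (0:ℝ) ≤ (N : ℝ) ^ (a - 2) := Real.rpow_nonneg (Nat.cast_nonneg N) _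
      obtain ⟨n, rfl⟩ : ∃ n, N = n + 1 := ⟨N - 1, by omega⟩
      set M := n + 1 with hM
      have hcast : ((n : ℝ) + 1) = (M : ℝ) := by rw [hM]; push_cast; ring
      have hup0 : S M ≤ 2 + ((M : ℝ) ^ (p + 1) - 1) / (p + 1) := by
        rw [← hcast]
        linarith [hAu n, hSshift n, h0p1]
      have h6 := mul_le_mul_of_nonneg_left hup0 hc
      have expand : (M : ℝ) ^ (a - 2) * (2 + ((M : ℝ) ^ (p + 1) - 1) / (p + 1))
          = 2 * (M : ℝ) ^ (a - 2) + (1 - (M : ℝ) ^ (a - 2)) / (p + 1) := by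
        linear_combination (e1 M hN) / (p + 1)
      linarith [h6, expand.le]
  have : (1 : ℝ) / (2 - a) = 1 / (p + 1) := by rw [hp_def]; ring_nf
  rw [this]
  exact key



lemma aux_cesaro {w r c : ℕ → ℝ} {C L : ℝ}
    (hw : ∀ m, 0 ≤ w m) (hcpos : ∀ N, 0 ≤ c N)
    (hc0 : Tendsto c atTop (𝓝 0))
    (hcW : Tendsto (fun N => c N * ∑ m ∈ Finset.range N, w m) atTop (𝓝 L))
    (hr : Tendsto r atTop (𝓝 C)) :
    Tendsto (fun N => c N * ∑ m ∈ Finset.range N, r m * w m) atTop (𝓝 (C * L)) := by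
  have hT : Tendsto (fun N => c N * ∑ m ∈ Finset.range N, (r m - C) * w m) atTop (𝓝 0) := by
    rw [Metric.tendsto_atTop]
    intro ε hε
    -- choose ε'
    set ε' : ℝ := ε / (2 * (|L| + 1)) with hε'
    have hL1 : (0:ℝ) < |L| + 1 := by positivity
    have hε'pos : 0 < ε' := by positivity
    -- M from hr
    obtain ⟨M, hM⟩ := (Metric.tendsto_atTop.mp hr) ε' hε'pos
    set B : ℝ := ∑ m ∈ Finset.range M, |r m - C| * w m with hB
    have hBnn : 0 ≤ B := Finset.sum_nonneg fun m _ => mul_nonneg (abs_nonneg _) (hw m)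
    -- eventualities
    have h1 : ∀ᶠ N in atTop, c N * B < ε / 2 := by
      have := hc0.mul_const B
      rw [zero_mul] at this
      have h2 := (Metric.tendsto_atTop.mp this) (ε / 2) (by positivity)
      obtain ⟨N₁, hN₁⟩ := h2
      filter_upwards [eventually_ge_atTop N₁] with N hN
      have := hN₁ N hN
      rw [Real.dist_eq, sub_zero] at this
      calc c N * B ≤ |c N * B| := le_abs_self _
        _ < ε / 2 := this
    have h2 : ∀ᶠ N in atTop, c N * ∑ m ∈ Finset.range N, w m < |L| + 1 := by
      have h3 := hcW.eventually (eventually_lt_nhds (show L < |L| + 1 by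
        linarith [le_abs_self L]))
      exact h3
    rw [← eventually_atTop]
    filter_upwards [h1, h2, eventually_ge_atTop M] with N hN1 hN2 hNM
    rw [Real.dist_eq, sub_zero]
    have habs : |c N * ∑ m ∈ Finset.range N, (r m - C) * w m|
        ≤ c N * ∑ m ∈ Finset.range N, |r m - C| * w m := by
      rw [abs_mul, abs_of_nonneg (hcpos N)]
      apply mul_le_mul_of_nonneg_left _ (hcpos N)
      calc |∑ m ∈ Finset.range N, (r m - C) * w m|
          ≤ ∑ m ∈ Finset.range N, |(r m - C) * w m| := Finset.abs_sum_le_sum_abs _ _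
        _ = ∑ m ∈ Finset.range N, |r m - C| * w m := by
            apply Finset.sum_congr rfl
            intro m _
            rw [abs_mul, abs_of_nonneg (hw m)]
    have hsplit : ∑ m ∈ Finset.range N, |r m - C| * w m
        = B + ∑ m ∈ Finset.Ico M N, |r m - C| * w m := by
      rw [hB, Finset.sum_range_add_sum_Ico _ hNM]
    have htail : ∑ m ∈ Finset.Ico M N, |r m - C| * w m ≤ ε' * ∑ m ∈ Finset.range N, w m := by
      calc ∑ m ∈ Finset.Ico M N, |r m - C| * w m
          ≤ ∑ m ∈ Finset.Ico M N, ε' * w m := by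
            apply Finset.sum_le_sum
            intro m hm
            rw [Finset.mem_Ico] at hm
            have := hM m hm.1
            rw [Real.dist_eq] at this
            exact mul_le_mul_of_nonneg_right this.le (hw m)
        _ = ε' * ∑ m ∈ Finset.Ico M N, w m := by rw [Finset.mul_sum]
        _ ≤ ε' * ∑ m ∈ Finset.range N, w m := by
            apply mul_le_mul_of_nonneg_left _ hε'pos.le
            have := Finset.sum_range_add_sum_Ico w hNM
            have h0 : 0 ≤ ∑ m ∈ Finset.range M, w m :=
              Finset.sum_nonneg fun m _ => hw m
            linarith
    have hfin : c N * ∑ m ∈ Finset.range N, |r m - C| * w m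
        ≤ c N * B + ε' * (c N * ∑ m ∈ Finset.range N, w m) := by
      rw [hsplit, mul_add]
      have := mul_le_mul_of_nonneg_left htail (hcpos N)
      linarith
    have hlast : ε' * (c N * ∑ m ∈ Finset.range N, w m) ≤ ε' * (|L| + 1) :=
      mul_le_mul_of_nonneg_left hN2.le hε'pos.le
    have : ε' * (|L| + 1) = ε / 2 := by
      rw [hε']
      field_simp
    calc |c N * ∑ m ∈ Finset.range N, (r m - C) * w m|
        ≤ c N * ∑ m ∈ Finset.range N, |r m - C| * w m := habs
      _ ≤ c N * B + ε' * (c N * ∑ m ∈ Finset.range N, w m) := hfin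
      _ ≤ c N * B + ε / 2 := by linarith
      _ < ε := by linarith
  have hmain := (hcW.const_mul C).add hT
  rw [add_zero] at hmain
  have : (fun N => c N * ∑ m ∈ Finset.range N, r m * w m)
      = fun N => C * (c N * ∑ m ∈ Finset.range N, w m)
        + c N * ∑ m ∈ Finset.range N, (r m - C) * w m := by
    funext N
    simp only [Finset.mul_sum, ← Finset.sum_add_distrib]
    apply Finset.sum_congr rfl
    intro m _
    ring
  rw [this]
  exact hmain


lemma aux_c0 {a : ℝ} (ha2 : a < 2) :
    Tendsto (fun N : ℕ => (N : ℝ) ^ (a - 2)) atTop (𝓝 0) := by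
  have h := (tendsto_rpow_neg_atTop (by linarith : (0:ℝ) < 2 - a)).comp
    (tendsto_natCast_atTop_atTop (R := ℝ))
  simp only [Function.comp_def, show -(2 - a) = a - 2 by ring] at h
  exact h

lemma aux_sum_tendsto {a : ℝ} (ha : 0 < a) (ha2 : a < 2) (u : ℕ → ℝ) (C : ℝ)
    (hu : Tendsto (fun m : ℕ => u m * (m : ℝ) ^ (a - 1)) atTop (𝓝 C)) :
    Tendsto (fun N : ℕ => (N : ℝ) ^ (a - 2) * ∑ m ∈ Finset.range N, u m)
      atTop (𝓝 (C / (2 - a))) := by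
  set w : ℕ → ℝ := fun m => (m : ℝ) ^ (1 - a) with hw_def
  set r : ℕ → ℝ := fun m => u m * (m : ℝ) ^ (a - 1) with hr_def
  set c : ℕ → ℝ := fun N => (N : ℝ) ^ (a - 2) with hc_def
  have hw : ∀ m, 0 ≤ w m := fun m => Real.rpow_nonneg (Nat.cast_nonneg m) _
  have hcpos : ∀ N, 0 ≤ c N := fun N => Real.rpow_nonneg (Nat.cast_nonneg N) _
  have hces := aux_cesaro hw hcpos (aux_c0 ha2) (aux_pow_sum ha ha2) hu
  -- r m * w m = u m for m ≥ 1
  have hrw : ∀ m : ℕ, 1 ≤ m → r m * w m = u m := by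
    intro m hm
    have hm' : (0:ℝ) < m := by exact_mod_cast hm
    rw [hr_def, hw_def]
    show u m * (m : ℝ) ^ (a - 1) * (m : ℝ) ^ (1 - a) = u m
    rw [mul_assoc, ← Real.rpow_add hm', show a - 1 + (1 - a) = 0 by ring, Real.rpow_zero,
      mul_one]
  set δ : ℝ := u 0 - r 0 * w 0 with hδ
  have hsum : ∀ N : ℕ, 1 ≤ N →
      ∑ m ∈ Finset.range N, u m = (∑ m ∈ Finset.range N, r m * w m) + δ := by
    intro N hN
    obtain ⟨n, rfl⟩ : ∃ n, N = n + 1 := ⟨N - 1, by omega⟩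
    rw [Finset.sum_range_succ', Finset.sum_range_succ']
    have : ∀ i ∈ Finset.range n, u (i + 1) = r (i + 1) * w (i + 1) :=
      fun i _ => (hrw (i + 1) (Nat.le_add_left 1 i)).symm
    rw [Finset.sum_congr rfl this]
    rw [hδ]; ring
  have hδ0 : Tendsto (fun N : ℕ => c N * δ) atTop (𝓝 0) := by
    have := (aux_c0 ha2).mul_const δ
    rwa [zero_mul] at this
  have hfinal := hces.add hδ0
  rw [add_zero] at hfinal
  have heq : C * (1 / (2 - a)) = C / (2 - a) := by ring
  rw [heq] at hfinal
  refine hfinal.congr' ?_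
  filter_upwards [eventually_ge_atTop 1] with N hN
  show c N * (∑ m ∈ Finset.range N, r m * w m) + c N * δ
      = c N * ∑ m ∈ Finset.range N, u m
  rw [hsum N hN, mul_add]


lemma aux_g_limit (a b : ℝ) (ha : 0 < a) (hb : 0 < b) :
    Tendsto (fun m : ℕ => (m : ℝ) ^ a * Real.Gamma (b + m - 1) / Real.Gamma (a + (b + m - 1)))
      atTop (𝓝 1) := by
  rw [← tendsto_add_atTop_iff_nat 2]
  have h1 := aux_gamma_ratio b a hb ha
  have h3 : Tendsto (fun n : ℕ => (((n : ℝ) + 2) / n) ^ a) atTop (𝓝 1) := by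
    have t1 : Tendsto (fun n : ℕ => ((n : ℝ) + 2) / n) atTop (𝓝 1) := by
      have h := (tendsto_const_nhds (x := (1:ℝ)) (f := atTop (α := ℕ))).add
        ((tendsto_inv_atTop_zero.comp (tendsto_natCast_atTop_atTop (R := ℝ))).const_mul 2)
      rw [mul_zero, add_zero] at h
      refine h.congr' ?_
      filter_upwards [eventually_ge_atTop 1] with n hn
      have hn' : ((n:ℝ)) ≠ 0 := by positivity
      simp only [Function.comp_apply]
      field_simp
    have := t1.rpow_const (p := a) (Or.inl one_ne_zero)
    rwa [Real.one_rpow] at this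
  have h4 := h1.mul h3
  rw [mul_one] at h4
  refine h4.congr' ?_
  filter_upwards [eventually_ge_atTop 1] with n hn
  have hn0 : (0:ℝ) < n := by exact_mod_cast hn
  have e1 : ((n:ℝ) + 2) ^ a = (n : ℝ) ^ a * (((n : ℝ) + 2) / n) ^ a := by
    rw [← Real.mul_rpow hn0.le (by positivity)]
    rw [mul_div_cancel₀ _ hn0.ne']  -- n * ((n+2)/n) = n + 2 ?
  have e2 : (b + ((n + 2 : ℕ) : ℝ) - 1) = b + n + 1 := by push_cast; ring
  have e3 : (a + (b + ((n + 2 : ℕ) : ℝ) - 1)) = b + a + n + 1 := by push_cast; ring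
  show (n : ℝ) ^ a * Real.Gamma (b + n + 1) / Real.Gamma (b + a + n + 1) * (((n:ℝ) + 2) / n) ^ a
      = ((n + 2 : ℕ) : ℝ) ^ a * Real.Gamma (b + ((n + 2 : ℕ) : ℝ) - 1)
        / Real.Gamma (a + (b + ((n + 2 : ℕ) : ℝ) - 1))
  rw [e3, e2, show ((n + 2 : ℕ) : ℝ) = (n : ℝ) + 2 by push_cast; ring, e1]
  ring


lemma aux_wd (a b : ℝ) (ha : 0 < a) (hb : 0 < b) (g : ℝ → ℝ) :
    (∫ x in Set.Icc (0:ℝ) 1, g x ∂((volume.restrict (Set.Icc (0:ℝ) 1)).withDensity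
      (fun x => ENNReal.ofReal
        (x ^ (a - 1) * (1 - x) ^ (b - 1) * Real.Gamma (a + b) /
          (Real.Gamma a * Real.Gamma b)))))
      = ∫ x in Set.Ioo (0:ℝ) 1,
          (x ^ (a - 1) * (1 - x) ^ (b - 1) * Real.Gamma (a + b) /
            (Real.Gamma a * Real.Gamma b)) * g x := by
  set d : ℝ → ℝ := fun x => x ^ (a - 1) * (1 - x) ^ (b - 1) * Real.Gamma (a + b) /
    (Real.Gamma a * Real.Gamma b) with hd_def
  have hd_meas : Measurable d := by
    rw [hd_def]; fun_prop
  have h1 : (((volume.restrict (Set.Icc (0:ℝ) 1)).withDensity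
      (fun x => ENNReal.ofReal (d x))).restrict (Set.Icc (0:ℝ) 1))
      = (volume.restrict (Set.Icc (0:ℝ) 1)).withDensity (fun x => ENNReal.ofReal (d x)) := by
    rw [restrict_withDensity measurableSet_Icc, Measure.restrict_restrict measurableSet_Icc,
      Set.inter_self]
  show (∫ x in Set.Icc (0:ℝ) 1, g x ∂((volume.restrict (Set.Icc (0:ℝ) 1)).withDensity
      (fun x => ENNReal.ofReal (d x)))) = ∫ x in Set.Ioo (0:ℝ) 1, d x * g x
  rw [h1]
  have h2 : (fun x => ENNReal.ofReal (d x)) = (fun x => ((d x).toNNReal : ℝ≥0∞)) := rfl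
  rw [h2, integral_withDensity_eq_integral_smul hd_meas.real_toNNReal g]
  rw [integral_Icc_eq_integral_Ioo]
  refine setIntegral_congr_fun measurableSet_Ioo ?_
  intro x hx
  obtain ⟨hx0, hx1⟩ := hx
  have hd0 : 0 ≤ d x := by
    rw [hd_def]
    have h1 : (0:ℝ) ≤ x ^ (a - 1) := Real.rpow_nonneg hx0.le _
    have h2 : (0:ℝ) ≤ (1 - x) ^ (b - 1) := Real.rpow_nonneg (by linarith) _
    have h3 : (0:ℝ) < Real.Gamma (a + b) := Real.Gamma_pos_of_pos (by linarith)
    have h4 : (0:ℝ) < Real.Gamma a * Real.Gamma b :=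
      mul_pos (Real.Gamma_pos_of_pos ha) (Real.Gamma_pos_of_pos hb)
    positivity
  show (d x).toNNReal • g x = d x * g x
  rw [NNReal.smul_def, Real.coe_toNNReal _ hd0, smul_eq_mul]

lemma aux_int (a b : ℝ) (ha : 0 < a) (hb : 0 < b) (j i : ℕ) :
    IntegrableOn (fun x : ℝ =>
      (x ^ (a - 1) * (1 - x) ^ (b - 1) * Real.Gamma (a + b) /
        (Real.Gamma a * Real.Gamma b)) * (x ^ j * (1 - x) ^ i)) (Set.Ioo 0 1) := by
  set cc : ℝ := Real.Gamma (a + b) / (Real.Gamma a * Real.Gamma b) with hcc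
  have hg0 : IntegrableOn (fun x : ℝ => cc * (x ^ (a - 1) * (1 - x) ^ (b - 1)))
      (Set.Ioo 0 1) := (aux_beta_integrable ha hb).const_mul cc
  refine hg0.mono' ?_ ?_
  · apply Measurable.aestronglyMeasurable
    fun_prop
  · rw [ae_restrict_iff' measurableSet_Ioo]
    filter_upwards with x hx
    obtain ⟨hx0, hx1⟩ := hx
    have h1 : (0:ℝ) ≤ x ^ (a - 1) := Real.rpow_nonneg hx0.le _
    have h2 : (0:ℝ) ≤ (1 - x) ^ (b - 1) := Real.rpow_nonneg (by linarith) _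
    have h3 : (0:ℝ) < Real.Gamma (a + b) := Real.Gamma_pos_of_pos (by linarith)
    have h4 : (0:ℝ) < Real.Gamma a * Real.Gamma b :=
      mul_pos (Real.Gamma_pos_of_pos ha) (Real.Gamma_pos_of_pos hb)
    have hcc0 : 0 ≤ cc := le_of_lt (by rw [hcc]; positivity)
    have hpoly0 : 0 ≤ x ^ j * (1 - x) ^ i :=
      mul_nonneg (pow_nonneg hx0.le j) (pow_nonneg (by linarith) i)
    have hpoly1 : x ^ j * (1 - x) ^ i ≤ 1 := by
      calc x ^ j * (1 - x) ^ i ≤ 1 * 1 := by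
            apply mul_le_mul _ _ (pow_nonneg (by linarith) i) zero_le_one
            · exact pow_le_one₀ hx0.le hx1.le
            · exact pow_le_one₀ (by linarith) (by linarith)
        _ = 1 := by norm_num
    have hd_eq : x ^ (a - 1) * (1 - x) ^ (b - 1) * Real.Gamma (a + b) /
        (Real.Gamma a * Real.Gamma b) = cc * (x ^ (a - 1) * (1 - x) ^ (b - 1)) := by
      rw [hcc]; ring
    rw [Real.norm_eq_abs, hd_eq, abs_mul]
    have hdnn : 0 ≤ cc * (x ^ (a - 1) * (1 - x) ^ (b - 1)) := by positivity
    rw [abs_of_nonneg hdnn, abs_of_nonneg hpoly0]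
    calc cc * (x ^ (a - 1) * (1 - x) ^ (b - 1)) * (x ^ j * (1 - x) ^ i)
        ≤ cc * (x ^ (a - 1) * (1 - x) ^ (b - 1)) * 1 :=
          mul_le_mul_of_nonneg_left hpoly1 hdnn
      _ = cc * (x ^ (a - 1) * (1 - x) ^ (b - 1)) := mul_one _


lemma aux_lam_eq (a b : ℝ) (ha : 0 < a) (hb : 0 < b) (N : ℕ) (hN : 2 ≤ N) :
    (∑ k ∈ Finset.Icc 2 N, (N.choose k : ℝ) *
      ∫ x in Set.Icc (0:ℝ) 1, x ^ (k - 2) * (1 - x) ^ (N - k)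
        ∂((volume.restrict (Set.Icc (0:ℝ) 1)).withDensity
          (fun x => ENNReal.ofReal
            (x ^ (a - 1) * (1 - x) ^ (b - 1) * Real.Gamma (a + b) /
              (Real.Gamma a * Real.Gamma b)))))
      = ∑ m ∈ Finset.range N, (m : ℝ) *
          (Real.Gamma (a + b) / (Real.Gamma a * Real.Gamma b) *
            (Real.Gamma a * Real.Gamma (b + m - 1) / Real.Gamma (a + (b + m - 1)))) := by
  set d : ℝ → ℝ := fun x => x ^ (a - 1) * (1 - x) ^ (b - 1) * Real.Gamma (a + b) /
    (Real.Gamma a * Real.Gamma b) with hd_def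
  calc (∑ k ∈ Finset.Icc 2 N, (N.choose k : ℝ) *
      ∫ x in Set.Icc (0:ℝ) 1, x ^ (k - 2) * (1 - x) ^ (N - k)
        ∂((volume.restrict (Set.Icc (0:ℝ) 1)).withDensity
          (fun x => ENNReal.ofReal (d x))))
      = ∑ k ∈ Finset.Icc 2 N, (N.choose k : ℝ) *
          ∫ x in Set.Ioo (0:ℝ) 1, d x * (x ^ (k - 2) * (1 - x) ^ (N - k)) :=
        Finset.sum_congr rfl fun k _ => by
          rw [aux_wd a b ha hb (fun x => x ^ (k - 2) * (1 - x) ^ (N - k))]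
    _ = ∑ k ∈ Finset.Icc 2 N,
          ∫ x in Set.Ioo (0:ℝ) 1, (N.choose k : ℝ) * (d x * (x ^ (k - 2) * (1 - x) ^ (N - k))) :=
        Finset.sum_congr rfl fun k _ => (MeasureTheory.integral_const_mul _ _).symm
    _ = ∫ x in Set.Ioo (0:ℝ) 1, ∑ k ∈ Finset.Icc 2 N,
          (N.choose k : ℝ) * (d x * (x ^ (k - 2) * (1 - x) ^ (N - k))) :=
        (integral_finset_sum _ fun k _ =>
          ((aux_int a b ha hb (k - 2) (N - k)).const_mul _)).symm
    _ = ∫ x in Set.Ioo (0:ℝ) 1, ∑ m ∈ Finset.range N,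
          (m : ℝ) * (d x * (x ^ 0 * (1 - x) ^ (m - 1))) := by
        refine setIntegral_congr_fun measurableSet_Ioo ?_
        intro x hx
        have hid := aux_identity x hx.1.ne' N hN
        calc ∑ k ∈ Finset.Icc 2 N, (N.choose k : ℝ) * (d x * (x ^ (k - 2) * (1 - x) ^ (N - k)))
            = d x * ∑ k ∈ Finset.Icc 2 N, (N.choose k : ℝ) * (x ^ (k - 2) * (1 - x) ^ (N - k)) := by
              rw [Finset.mul_sum]
              exact Finset.sum_congr rfl fun k _ => by ring
          _ = d x * ∑ m ∈ Finset.range N, (m : ℝ) * (1 - x) ^ (m - 1) := by rw [hid]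
          _ = ∑ m ∈ Finset.range N, (m : ℝ) * (d x * (x ^ 0 * (1 - x) ^ (m - 1))) := by
              rw [Finset.mul_sum]
              exact Finset.sum_congr rfl fun m _ => by rw [pow_zero]; ring
    _ = ∑ m ∈ Finset.range N,
          ∫ x in Set.Ioo (0:ℝ) 1, (m : ℝ) * (d x * (x ^ 0 * (1 - x) ^ (m - 1))) :=
        integral_finset_sum _ fun m _ => ((aux_int a b ha hb 0 (m - 1)).const_mul _)
    _ = ∑ m ∈ Finset.range N,
          (m : ℝ) * ∫ x in Set.Ioo (0:ℝ) 1, d x * (x ^ 0 * (1 - x) ^ (m - 1)) :=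
        Finset.sum_congr rfl fun m _ => MeasureTheory.integral_const_mul _ _
    _ = ∑ m ∈ Finset.range N, (m : ℝ) *
          (Real.Gamma (a + b) / (Real.Gamma a * Real.Gamma b) *
            (Real.Gamma a * Real.Gamma (b + m - 1) / Real.Gamma (a + (b + m - 1)))) := by
        refine Finset.sum_congr rfl fun m _ => ?_
        cases m with
        | zero => simp
        | succ j =>
          congr 1
          have hq : (0:ℝ) < b + ((j + 1 : ℕ) : ℝ) - 1 := by push_cast; linarith
          have hkey : ∀ x ∈ Set.Ioo (0:ℝ) 1,
              d x * (x ^ 0 * (1 - x) ^ ((j + 1) - 1))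
                = Real.Gamma (a + b) / (Real.Gamma a * Real.Gamma b) *
                  (x ^ (a - 1) * (1 - x) ^ ((b + ((j + 1 : ℕ) : ℝ) - 1) - 1)) := by
            intro x hx
            obtain ⟨hx0, hx1⟩ := hx
            have h1x : (0:ℝ) < 1 - x := by linarith
            have e1 : (1 - x) ^ ((b + ((j + 1 : ℕ) : ℝ) - 1) - 1)
                = (1 - x) ^ (b - 1) * (1 - x) ^ (j : ℕ) := by
              rw [show (b + ((j + 1 : ℕ) : ℝ) - 1) - 1 = (b - 1) + (j : ℕ) by push_cast; ring,
                Real.rpow_add h1x, Real.rpow_natCast]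
            rw [e1, show (j + 1) - 1 = j from rfl, pow_zero, hd_def]
            ring
          rw [setIntegral_congr_fun measurableSet_Ioo hkey, MeasureTheory.integral_const_mul,
            aux_beta_eval ha hq]
/-- For the Beta(a,b) measure Λ on [0,1] with 0 < a < 2, b > 0, and
λ_N := Σ_{k=2}^N binom(N,k) ∫ x^(k-2)(1-x)^(N-k) dΛ(x), one has
N^(2−a)·λ_N⁻¹ → (2−a)·Γ(b)/Γ(a+b), i.e. c_N = λ_N⁻¹ ∼ ((2−a)Γ(b)/Γ(a+b))·N^(a−2). -/
theorem beta_coalescent_coalescence_probability_asymptotics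
    (a b : ℝ) (ha : 0 < a) (ha2 : a < 2) (hb : 0 < b)
    (Λ : Measure ℝ)
    (hΛ : Λ = (volume.restrict (Set.Icc (0:ℝ) 1)).withDensity
      (fun x => ENNReal.ofReal
        (x ^ (a - 1) * (1 - x) ^ (b - 1) * Real.Gamma (a + b) /
          (Real.Gamma a * Real.Gamma b))))
    (lam : ℕ → ℝ)
    (hlam : ∀ N : ℕ, lam N = ∑ k ∈ Finset.Icc 2 N, (N.choose k : ℝ) *
      ∫ x in Set.Icc (0:ℝ) 1, x ^ (k - 2) * (1 - x) ^ (N - k) ∂Λ) :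
    Tendsto (fun N : ℕ => (N : ℝ) ^ ((2:ℝ) - a) * (lam N)⁻¹) atTop
      (𝓝 ((2 - a) * Real.Gamma b / Real.Gamma (a + b))) := by
  subst hΛ
  -- the sequence u
  set u : ℕ → ℝ := fun m => (m : ℝ) *
    (Real.Gamma (a + b) / (Real.Gamma a * Real.Gamma b) *
      (Real.Gamma a * Real.Gamma (b + m - 1) / Real.Gamma (a + (b + m - 1)))) with hu_def
  have hlam_eq : ∀ N : ℕ, 2 ≤ N → lam N = ∑ m ∈ Finset.range N, u m := by
    intro N hN
    rw [hlam N, aux_lam_eq a b ha hb N hN]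
  -- per-term limit
  set C : ℝ := Real.Gamma (a + b) / Real.Gamma b with hC_def
  have hΓa : Real.Gamma a ≠ 0 := (Real.Gamma_pos_of_pos ha).ne'
  have hΓb : Real.Gamma b ≠ 0 := (Real.Gamma_pos_of_pos hb).ne'
  have hΓab : Real.Gamma (a + b) ≠ 0 := (Real.Gamma_pos_of_pos (by linarith)).ne'
  have hterm : Tendsto (fun m : ℕ => u m * (m : ℝ) ^ (a - 1)) atTop (𝓝 C) := by
    have hg := (aux_g_limit a b ha hb).const_mul C
    rw [mul_one] at hg
    refine hg.congr' ?_
    filter_upwards [eventually_ge_atTop 1] with m hm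
    have hm0 : (0:ℝ) < m := by exact_mod_cast hm
    have hpow : (m : ℝ) ^ a = (m : ℝ) * (m : ℝ) ^ (a - 1) := by
      have h := Real.rpow_add hm0 1 (a - 1)
      rw [Real.rpow_one, show (1:ℝ) + (a - 1) = a by ring] at h
      exact h
    show C * ((m : ℝ) ^ a * Real.Gamma (b + m - 1) / Real.Gamma (a + (b + m - 1)))
        = ((m : ℝ) *
          (Real.Gamma (a + b) / (Real.Gamma a * Real.Gamma b) *
            (Real.Gamma a * Real.Gamma (b + m - 1) / Real.Gamma (a + (b + m - 1)))))
          * (m : ℝ) ^ (a - 1)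
    have hcc : Real.Gamma (a + b) / (Real.Gamma a * Real.Gamma b) * Real.Gamma a = C := by
      rw [hC_def]; field_simp
    rw [hpow, ← hcc]
    ring
  have hsum := aux_sum_tendsto ha ha2 u C hterm
  -- transfer to lam
  have hlamtend : Tendsto (fun N : ℕ => (N : ℝ) ^ (a - 2) * lam N) atTop (𝓝 (C / (2 - a))) := by
    refine hsum.congr' ?_
    filter_upwards [eventually_ge_atTop 2] with N hN
    rw [hlam_eq N hN]
  have hCne : C / (2 - a) ≠ 0 := by
    apply div_ne_zero
    · rw [hC_def]; exact div_ne_zero hΓab hΓb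
    · linarith
  have hinv := hlamtend.inv₀ hCne
  have hval : (C / (2 - a))⁻¹ = (2 - a) * Real.Gamma b / Real.Gamma (a + b) := by
    rw [hC_def, inv_div, div_div_eq_mul_div]
  rw [hval] at hinv
  refine hinv.congr' ?_
  filter_upwards [eventually_ge_atTop 1] with N hN
  have hN0 : (0:ℝ) ≤ (N : ℝ) := Nat.cast_nonneg N
  rw [mul_inv, ← Real.rpow_neg hN0, show -(a - 2) = 2 - a by ring]
end
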